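/- arXiv:2604.13096 — 5 statements merged into one kernel-verified Lean document; each statement's English description precedes it below -/
import Mathlib

section
/- Closed-form expected return for the closed-chain qubit model: let N ≥ 1 and x₊, x₋ ∈ ℝ. Define the step weight q(true,true) = 1−x₊, q(true,false) = x₊, q(false,true) = x₋, q(false,false) = 1−x₋. Then Σ over all binary trajectories ψ : Fin (N+1) → Bool with ψ(0) = ψ(N) = true of [((p(ψ)−1)·x₊ − (N+1−p(ψ))·x₋) · ∏_{i<N} q(ψ(i), ψ(i+1))] equals Σ_{p=2}^{N} Σ_{c=1}^{min(p−1,N+1−p)} C(p−1,c)·C(N−p,c−1)·((p−1)x₊ − (N+1−p)x₋)·x₊^c (1−x₊)^{p−1−c} x₋^c (1−x₋)^{N+1−p−c} + N·x₊·(1−x₊)^N. In particular the left-hand side, nominally a sum of 2^{N−1} terms, is computed by O(N²) terms. -/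
open scoped BigOperators

/-- Step weight of the two-level model: `q(true,true) = 1−x₊`, `q(true,false) = x₊`,
`q(false,true) = x₋`, `q(false,false) = 1−x₋`. -/
noncomputable def qubitStep (xp xm : ℝ) : Bool → Bool → ℝ
  | true, true => 1 - xp
  | true, false => xp
  | false, true => xm
  | false, false => 1 - xm

def tc (n : ℕ) (ψ : Fin (n+1) → Bool) : ℕ :=
  (Finset.univ.filter (fun i : Fin (n+1) => ψ i = true)).card

def dc (n : ℕ) (ψ : Fin (n+1) → Bool) : ℕ :=
  (Finset.univ.filter (fun i : Fin n => ψ i.castSucc = true ∧ ψ i.succ = false)).card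

def qbSet (n p c : ℕ) (b : Bool) : Finset (Fin (n+1) → Bool) :=
  Finset.univ.filter (fun ψ => ψ 0 = true ∧ ψ (Fin.last n) = b ∧ tc n ψ = p ∧ dc n ψ = c)

def G (n p c : ℕ) : ℕ := (qbSet n p c true).card
def H (n p c : ℕ) : ℕ := (qbSet n p c false).card

lemma tc_snoc (n : ℕ) (φ : Fin (n+1) → Bool) (b : Bool) :
    tc (n+1) (Fin.snoc φ b) = tc n φ + (if b = true then 1 else 0) := by
  simp only [tc, Finset.card_filter]
  rw [Fin.sum_univ_castSucc]
  simp [Fin.snoc_castSucc, Fin.snoc_last]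

lemma dc_snoc (n : ℕ) (φ : Fin (n+1) → Bool) (b : Bool) :
    dc (n+1) (Fin.snoc φ b) = dc n φ +
      (if φ (Fin.last n) = true ∧ b = false then 1 else 0) := by
  simp only [dc, Finset.card_filter]
  rw [Fin.sum_univ_castSucc]
  congr 1
  · apply Finset.sum_congr rfl
    intro j _
    rw [Fin.succ_castSucc]
    simp only [Fin.snoc_castSucc]
  · rw [Fin.succ_last]
    simp [Fin.snoc_castSucc, Fin.snoc_last]

lemma sum_snoc {M : Type*} [AddCommMonoid M] (n : ℕ) (f : (Fin (n+2) → Bool) → M) :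
    ∑ ψ : Fin (n+2) → Bool, f ψ
      = ∑ φ : Fin (n+1) → Bool, (f (Fin.snoc φ true) + f (Fin.snoc φ false)) := by
  rw [← (Fin.snocEquiv (fun _ : Fin (n+2) => Bool)).sum_comp f]
  rw [Fintype.sum_prod_type_right]
  apply Finset.sum_congr rfl
  intro φ _
  rw [Fintype.sum_bool]
  rfl

lemma snoc_zero (n : ℕ) (φ : Fin (n+1) → Bool) (b : Bool) :
    (Fin.snoc φ b : Fin (n+2) → Bool) 0 = φ 0 := by
  have : (0 : Fin (n+2)) = Fin.castSucc 0 := rfl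
  rw [this, Fin.snoc_castSucc]

lemma G_succ (n p c : ℕ) : G (n+1) (p+1) c = G n p c + H n p c := by
  simp only [G, H, qbSet, Finset.card_filter, sum_snoc]
  rw [← Finset.sum_add_distrib]
  apply Finset.sum_congr rfl
  intro φ _
  rw [snoc_zero, snoc_zero, Fin.snoc_last, Fin.snoc_last, tc_snoc, tc_snoc, dc_snoc, dc_snoc]
  by_cases h0 : φ 0 = true
  · by_cases hp : tc n φ = p
    · by_cases hc : dc n φ = c
      · cases hL : φ (Fin.last n) <;> simp [h0, hp, hc, hL]
      · simp [h0, hp, hc]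
    · simp [h0, hp]
  · simp [h0]

lemma G_zero (n c : ℕ) : G (n+1) 0 c = 0 := by
  rw [G, qbSet, Finset.card_eq_zero, Finset.filter_eq_empty_iff]
  rintro ψ - ⟨h0, -, hp, -⟩
  have hpos : 0 < tc (n+1) ψ := Finset.card_pos.2 ⟨0, by simp [h0]⟩
  omega

lemma H_succ (n p c : ℕ) : H (n+1) p (c+1) = H n p (c+1) + G n p c := by
  simp only [G, H, qbSet, Finset.card_filter, sum_snoc]
  rw [← Finset.sum_add_distrib]
  apply Finset.sum_congr rfl
  intro φ _
  rw [snoc_zero, snoc_zero, Fin.snoc_last, Fin.snoc_last, tc_snoc, tc_snoc, dc_snoc, dc_snoc]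
  by_cases h0 : φ 0 = true
  · by_cases hp : tc n φ = p
    · cases hL : φ (Fin.last n)
      · by_cases hc : dc n φ = c + 1 <;> simp [h0, hp, hL, hc]
      · by_cases hc : dc n φ = c <;> simp [h0, hp, hL, hc] <;> omega
    · simp [h0, hp]
  · simp [h0]

lemma H_zero (n p : ℕ) : H (n+1) p 0 = H n p 0 := by
  simp only [H, qbSet, Finset.card_filter, sum_snoc]
  apply Finset.sum_congr rfl
  intro φ _
  rw [snoc_zero, snoc_zero, Fin.snoc_last, Fin.snoc_last, tc_snoc, tc_snoc, dc_snoc, dc_snoc]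
  by_cases h0 : φ 0 = true
  · by_cases hp : tc n φ = p
    · cases hL : φ (Fin.last n) <;> simp [h0, hp, hL] <;> omega
    · simp [h0, hp]
  · simp [h0]

lemma sum_fun_fin_one {M : Type*} [AddCommMonoid M] (f : (Fin 1 → Bool) → M) :
    ∑ ψ : Fin 1 → Bool, f ψ = f (fun _ => true) + f (fun _ => false) := by
  rw [← (Equiv.funUnique (Fin 1) Bool).symm.sum_comp f, Fintype.sum_bool]
  rfl

lemma tc_const_true : tc 0 (fun _ => true) = 1 := by
  rw [tc]; simp

lemma tc_const_false : tc 0 (fun _ => false) = 0 := by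
  rw [tc]; simp

lemma dc_zero (ψ : Fin 1 → Bool) : dc 0 ψ = 0 := by
  rw [dc]; simp

lemma G_base (p c : ℕ) : G 0 p c = if p = 1 ∧ c = 0 then 1 else 0 := by
  rw [G, qbSet, Finset.card_filter, sum_fun_fin_one]
  rw [tc_const_true, tc_const_false, dc_zero, dc_zero]
  by_cases hp : p = 1 <;> by_cases hc : c = 0 <;>
    simp [hp, hc, Fin.last] <;> omega

lemma H_base (p c : ℕ) : H 0 p c = 0 := by
  rw [H, qbSet, Finset.card_filter, sum_fun_fin_one]
  simp [Fin.last]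

def Gf (n p c : ℕ) : ℕ :=
  if c = 0 then (if p = n+1 then 1 else 0)
  else if p ≤ n then Nat.choose (p-1) c * Nat.choose (n-p) (c-1) else 0

def Hf (n p c : ℕ) : ℕ :=
  if 1 ≤ p ∧ p ≤ n ∧ 1 ≤ c then Nat.choose (p-1) (c-1) * Nat.choose (n-p) (c-1) else 0


lemma Gf_rec (n p c : ℕ) : Gf (n+1) (p+1) c = Gf n p c + Hf n p c := by
  simp only [Gf, Hf]
  split_ifs with h1 h2 h3 h4 <;> try omega
  · have hp : p - 1 + 1 = p := by omega
    have hc : c - 1 + 1 = c := by omega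
    have key := Nat.choose_succ_succ' (p-1) (c-1)
    rw [hp, hc] at key
    rw [Nat.add_sub_cancel, show n+1-(p+1) = n-p from by omega, key]
    ring
  · have hp0 : p = 0 := by omega
    subst hp0
    rw [Nat.choose_eq_zero_of_lt (show 0 < c by omega)]
    simp

lemma Hf_rec (n p c : ℕ) : Hf (n+1) p (c+1) = Hf n p (c+1) + Gf n p c := by
  simp only [Hf, Gf, Nat.add_sub_cancel]
  split_ifs <;> try omega
  · rename_i ha hb hc hd
    subst hc
    simp only [Nat.choose_zero_right]
  · rename_i ha hb hc hd
    have key := Nat.choose_succ_succ' (n-p) (c-1)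
    rw [show c - 1 + 1 = c from by omega] at key
    rw [show n+1-p = (n-p)+1 from by omega, key]
    ring
  · rename_i ha hb hc hd
    subst hc
    rw [hd]
    simp
  · rename_i ha hb hc hd
    rw [show n+1-p = 0 from by omega, Nat.choose_eq_zero_of_lt (show 0 < c from by omega)]
    simp
  · rename_i ha hb hc hd
    rw [show p - 1 = 0 from by omega, Nat.choose_eq_zero_of_lt (show 0 < c from by omega)]
    simp

lemma Gf_base (p c : ℕ) : Gf 0 p c = if p = 1 ∧ c = 0 then 1 else 0 := by
  unfold Gf
  split_ifs <;> try omega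
  all_goals
    rw [show p - 1 = 0 from by omega, Nat.choose_eq_zero_of_lt (show 0 < c from by omega)]
    simp

lemma Hf_base (p c : ℕ) : Hf 0 p c = 0 := by
  unfold Hf
  rw [if_neg (by omega)]

lemma Gf_p0 (n c : ℕ) : Gf (n+1) 0 c = 0 := by
  unfold Gf
  rcases c with _ | c'
  · rw [if_pos rfl, if_neg (by omega)]
  · rw [if_neg (by omega), if_pos (by omega),
      show (0:ℕ) - 1 = 0 from by omega,
      Nat.choose_eq_zero_of_lt (show 0 < c'+1 from by omega)]
    simp

lemma GH_closed (n : ℕ) : ∀ p c, G n p c = Gf n p c ∧ H n p c = Hf n p c := by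
  induction n with
  | zero =>
    intro p c
    refine ⟨?_, ?_⟩
    · rw [G_base, Gf_base]
    · rw [H_base, Hf_base]
  | succ n ih =>
    intro p c
    constructor
    · rcases p with _ | p'
      · rw [G_zero, Gf_p0]
      · rw [G_succ, (ih p' c).1, (ih p' c).2, Gf_rec]
    · rcases c with _ | c'
      · rw [H_zero, (ih p 0).2]
        unfold Hf
        rw [if_neg (by omega), if_neg (by omega)]
      · rw [H_succ, (ih p (c'+1)).2, (ih p c').1, Hf_rec]

lemma qubitStep_eq (xp xm : ℝ) (a b : Bool) :
    qubitStep xp xm a b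
      = xp ^ (if a = true ∧ b = false then 1 else 0)
        * (1-xp) ^ (if a = true ∧ b = true then 1 else 0)
        * xm ^ (if a = false ∧ b = true then 1 else 0)
        * (1-xm) ^ (if a = false ∧ b = false then 1 else 0) := by
  cases a <;> cases b <;> simp [qubitStep]

lemma prod_qubitStep (N : ℕ) (xp xm : ℝ) (ψ : Fin (N+1) → Bool)
    (h0 : ψ 0 = true) (hL : ψ (Fin.last N) = true) :
    ∏ i : Fin N, qubitStep xp xm (ψ i.castSucc) (ψ i.succ)
      = xp ^ dc N ψ * (1-xp) ^ (tc N ψ - 1 - dc N ψ) * xm ^ dc N ψ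
          * (1-xm) ^ (N + 1 - tc N ψ - dc N ψ) := by
  classical
  set A := (Finset.univ.filter (fun i : Fin N => ψ i.castSucc = true ∧ ψ i.succ = false)).card with hA
  set B := (Finset.univ.filter (fun i : Fin N => ψ i.castSucc = true ∧ ψ i.succ = true)).card with hB
  set C := (Finset.univ.filter (fun i : Fin N => ψ i.castSucc = false ∧ ψ i.succ = true)).card with hC
  set D := (Finset.univ.filter (fun i : Fin N => ψ i.castSucc = false ∧ ψ i.succ = false)).card with hD
  have hdc : dc N ψ = A := by rw [dc]
  have hprod : ∏ i : Fin N, qubitStep xp xm (ψ i.castSucc) (ψ i.succ)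
      = xp ^ A * (1-xp) ^ B * xm ^ C * (1-xm) ^ D := by
    rw [Finset.prod_congr rfl (fun i _ => qubitStep_eq xp xm (ψ i.castSucc) (ψ i.succ))]
    rw [Finset.prod_mul_distrib, Finset.prod_mul_distrib, Finset.prod_mul_distrib,
      Finset.prod_pow_eq_pow_sum, Finset.prod_pow_eq_pow_sum, Finset.prod_pow_eq_pow_sum,
      Finset.prod_pow_eq_pow_sum, hA, hB, hC, hD,
      Finset.card_filter, Finset.card_filter, Finset.card_filter, Finset.card_filter]
  have hS : A + B = ∑ i : Fin N, (if ψ i.castSucc = true then 1 else 0) := by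
    rw [hA, hB, Finset.card_filter, Finset.card_filter, ← Finset.sum_add_distrib]
    apply Finset.sum_congr rfl
    intro i _
    cases hx : ψ i.castSucc <;> cases hy : ψ i.succ <;> simp [hx, hy]
  have hT : C + B = ∑ i : Fin N, (if ψ i.succ = true then 1 else 0) := by
    rw [hC, hB, Finset.card_filter, Finset.card_filter, ← Finset.sum_add_distrib]
    apply Finset.sum_congr rfl
    intro i _
    cases hx : ψ i.castSucc <;> cases hy : ψ i.succ <;> simp [hx, hy]
  have htc1 : tc N ψ = (∑ i : Fin N, (if ψ i.castSucc = true then 1 else 0)) + 1 := by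
    rw [tc, Finset.card_filter, Fin.sum_univ_castSucc]
    simp [hL]
  have htc2 : tc N ψ = 1 + ∑ i : Fin N, (if ψ i.succ = true then 1 else 0) := by
    rw [tc, Finset.card_filter, Fin.sum_univ_succ]
    simp [h0]
  have htot : A + B + C + D = N := by
    rw [hA, hB, hC, hD, Finset.card_filter, Finset.card_filter, Finset.card_filter,
      Finset.card_filter, ← Finset.sum_add_distrib, ← Finset.sum_add_distrib,
      ← Finset.sum_add_distrib]
    have : ∀ i : Fin N, ((if ψ i.castSucc = true ∧ ψ i.succ = false then 1 else 0)
        + (if ψ i.castSucc = true ∧ ψ i.succ = true then 1 else 0)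
        + (if ψ i.castSucc = false ∧ ψ i.succ = true then 1 else 0)
        + (if ψ i.castSucc = false ∧ ψ i.succ = false then 1 else 0)) = 1 := by
      intro i
      cases hx : ψ i.castSucc <;> cases hy : ψ i.succ <;> simp [hx, hy]
    rw [Finset.sum_congr rfl (fun i _ => this i)]
    simp
  rw [hprod, hdc,
    show B = tc N ψ - 1 - A from by omega,
    show C = A from by omega,
    show D = N + 1 - tc N ψ - A from by omega]

noncomputable def trm (N p c : ℕ) (xp xm : ℝ) : ℝ :=
  (((p:ℝ)-1)*xp - ((N:ℝ)+1-(p:ℝ))*xm) * xp^c * (1-xp)^(p-1-c) * xm^c * (1-xm)^(N+1-p-c)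

lemma step1 (N : ℕ) (xp xm : ℝ) :
    ∑ ψ ∈ Finset.univ.filter (fun ψ : Fin (N + 1) → Bool =>
        ψ 0 = true ∧ ψ (Fin.last N) = true),
      ((((Finset.univ.filter (fun i : Fin (N + 1) => ψ i = true)).card : ℝ) - 1) * xp
          - ((N : ℝ) + 1
              - ((Finset.univ.filter (fun i : Fin (N + 1) => ψ i = true)).card : ℝ)) * xm)
        * ∏ i : Fin N, qubitStep xp xm (ψ i.castSucc) (ψ i.succ)
    = ∑ ψ ∈ Finset.univ.filter (fun ψ : Fin (N + 1) → Bool =>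
        ψ 0 = true ∧ ψ (Fin.last N) = true), trm N (tc N ψ) (dc N ψ) xp xm := by
  apply Finset.sum_congr rfl
  intro ψ hψ
  rw [Finset.mem_filter] at hψ
  obtain ⟨-, h0, hL⟩ := hψ
  rw [prod_qubitStep N xp xm ψ h0 hL, trm]
  have : (Finset.univ.filter (fun i : Fin (N + 1) => ψ i = true)).card = tc N ψ := rfl
  rw [this]
  ring

lemma step2 (N : ℕ) (xp xm : ℝ) :
    ∑ ψ ∈ Finset.univ.filter (fun ψ : Fin (N + 1) → Bool =>
        ψ 0 = true ∧ ψ (Fin.last N) = true), trm N (tc N ψ) (dc N ψ) xp xm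
    = ∑ p ∈ Finset.range (N+2), ∑ c ∈ Finset.range (N+1),
        (G N p c : ℝ) * trm N p c xp xm := by
  classical
  rw [← Finset.sum_product']
  rw [← Finset.sum_fiberwise_of_maps_to (g := fun ψ : Fin (N+1) → Bool => (tc N ψ, dc N ψ))
      (t := Finset.range (N+2) ×ˢ Finset.range (N+1)) ?hmap]
  case hmap =>
    intro ψ _
    rw [Finset.mem_product, Finset.mem_range, Finset.mem_range]
    dsimp only
    constructor
    · have h : tc N ψ ≤ Fintype.card (Fin (N+1)) := Finset.card_le_univ _
      rw [Fintype.card_fin] at h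
      omega
    · have h : dc N ψ ≤ Fintype.card (Fin N) := Finset.card_le_univ _
      rw [Fintype.card_fin] at h
      omega
  apply Finset.sum_congr rfl
  rintro ⟨p, c⟩ -
  have hset : ((Finset.univ.filter (fun ψ : Fin (N + 1) → Bool =>
        ψ 0 = true ∧ ψ (Fin.last N) = true)).filter
          (fun ψ => (tc N ψ, dc N ψ) = (p, c))) = qbSet N p c true := by
    rw [Finset.filter_filter, qbSet]
    apply Finset.filter_congr
    intro ψ _
    simp [Prod.ext_iff, and_assoc]
  rw [hset]
  have hconst : ∀ ψ ∈ qbSet N p c true, trm N (tc N ψ) (dc N ψ) xp xm = trm N p c xp xm := by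
    intro ψ hψ
    simp only [qbSet, Finset.mem_filter] at hψ
    rw [hψ.2.2.2.1, hψ.2.2.2.2]
  rw [Finset.sum_congr rfl hconst, Finset.sum_const, G, nsmul_eq_mul]

lemma Gf_c0' (N p : ℕ) : Gf N p 0 = if p = N+1 then 1 else 0 := by
  unfold Gf; rw [if_pos rfl]

lemma Gf_cpos (N p c : ℕ) (hc : 1 ≤ c) :
    Gf N p c = if p ≤ N then Nat.choose (p-1) c * Nat.choose (N-p) (c-1) else 0 := by
  unfold Gf; rw [if_neg (by omega)]

lemma step3 (N : ℕ) (hN : 1 ≤ N) (xp xm : ℝ) :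
    ∑ p ∈ Finset.range (N+2), ∑ c ∈ Finset.range (N+1),
        (Gf N p c : ℝ) * trm N p c xp xm
    = (∑ p ∈ Finset.Icc 2 N, ∑ c ∈ Finset.Icc 1 (min (p - 1) (N + 1 - p)),
          ((Nat.choose (p - 1) c * Nat.choose (N - p) (c - 1) : ℕ) : ℝ)
            * (((p : ℝ) - 1) * xp - ((N : ℝ) + 1 - (p : ℝ)) * xm)
            * xp ^ c * (1 - xp) ^ (p - 1 - c) * xm ^ c * (1 - xm) ^ (N + 1 - p - c))
      + (N : ℝ) * xp * (1 - xp) ^ N := by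
  have hsplit : ∀ p, ∑ c ∈ Finset.range (N+1), (Gf N p c : ℝ) * trm N p c xp xm
      = (Gf N p 0 : ℝ) * trm N p 0 xp xm
        + ∑ c ∈ Finset.Ico 1 (N+1), (Gf N p c : ℝ) * trm N p c xp xm := by
    intro p
    rw [Finset.range_eq_Ico, Finset.sum_eq_sum_Ico_succ_bot (by omega)]
  rw [Finset.sum_congr rfl (fun p _ => hsplit p), Finset.sum_add_distrib, add_comm]
  congr 1
  · -- main double sum
    have hsub : Finset.Icc 2 N ⊆ Finset.range (N+2) := by
      intro p hp
      rw [Finset.mem_Icc] at hp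
      exact Finset.mem_range.2 (by omega)
    have hzero : ∀ p ∈ Finset.range (N+2), p ∉ Finset.Icc 2 N →
        ∑ c ∈ Finset.Ico 1 (N+1), (Gf N p c : ℝ) * trm N p c xp xm = 0 := by
      intro p hp hnot
      apply Finset.sum_eq_zero
      intro c hc
      rw [Finset.mem_Ico] at hc
      rw [Finset.mem_range] at hp
      rw [Finset.mem_Icc] at hnot
      rw [Gf_cpos N p c hc.1]
      by_cases hpn : p ≤ N
      · rw [if_pos hpn, show p - 1 = 0 from by omega,
          Nat.choose_eq_zero_of_lt (show 0 < c from by omega)]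
        simp
      · rw [if_neg hpn]
        simp
    rw [← Finset.sum_subset hsub hzero]
    apply Finset.sum_congr rfl
    intro p hp
    rw [Finset.mem_Icc] at hp
    have hsubc : Finset.Icc 1 (min (p-1) (N+1-p)) ⊆ Finset.Ico 1 (N+1) := by
      intro c hc
      rw [Finset.mem_Icc] at hc
      rw [Finset.mem_Ico]
      omega
    have hzeroc : ∀ c ∈ Finset.Ico 1 (N+1), c ∉ Finset.Icc 1 (min (p-1) (N+1-p)) →
        (Gf N p c : ℝ) * trm N p c xp xm = 0 := by
      intro c hc hnot
      rw [Finset.mem_Ico] at hc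
      rw [Finset.mem_Icc] at hnot
      rw [Gf_cpos N p c hc.1, if_pos (by omega)]
      have : p - 1 < c ∨ N + 1 - p < c := by omega
      rcases this with h | h
      · rw [Nat.choose_eq_zero_of_lt h]
        simp
      · rw [Nat.choose_eq_zero_of_lt (show N - p < c - 1 from by omega)]
        simp
    rw [← Finset.sum_subset hsubc hzeroc]
    apply Finset.sum_congr rfl
    intro c hc
    rw [Finset.mem_Icc] at hc
    rw [Gf_cpos N p c hc.1, if_pos (by omega), trm]
    push_cast
    ring
  · -- boundary term
    rw [Finset.sum_eq_single (N+1)]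
    · rw [Gf_c0', if_pos rfl, trm]
      simp only [Nat.add_sub_cancel, Nat.sub_self, Nat.sub_zero, pow_zero, Nat.cast_one]
      push_cast
      ring
    · intro p _ hp
      rw [Gf_c0', if_neg hp]
      push_cast
      ring
    · intro h
      exact absurd (Finset.mem_range.2 (by omega)) h

/-- Closed-form expected return for the closed-chain qubit model: the brute-force sum over
all `2^{N−1}` binary trajectories with both endpoints `true` equals the `O(N²)`-term
combinatorial double sum plus the boundary term `N·x₊·(1−x₊)^N`. -/
theorem closed_chain_expected_return (N : ℕ) (hN : 1 ≤ N) (xp xm : ℝ) :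
    ∑ ψ ∈ Finset.univ.filter (fun ψ : Fin (N + 1) → Bool =>
        ψ 0 = true ∧ ψ (Fin.last N) = true),
      ((((Finset.univ.filter (fun i : Fin (N + 1) => ψ i = true)).card : ℝ) - 1) * xp
          - ((N : ℝ) + 1
              - ((Finset.univ.filter (fun i : Fin (N + 1) => ψ i = true)).card : ℝ)) * xm)
        * ∏ i : Fin N, qubitStep xp xm (ψ i.castSucc) (ψ i.succ)
    = (∑ p ∈ Finset.Icc 2 N, ∑ c ∈ Finset.Icc 1 (min (p - 1) (N + 1 - p)),
          ((Nat.choose (p - 1) c * Nat.choose (N - p) (c - 1) : ℕ) : ℝ)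
            * (((p : ℝ) - 1) * xp - ((N : ℝ) + 1 - (p : ℝ)) * xm)
            * xp ^ c * (1 - xp) ^ (p - 1 - c) * xm ^ c * (1 - xm) ^ (N + 1 - p - c))
      + (N : ℝ) * xp * (1 - xp) ^ N := by
  rw [step1, step2, ← step3 N hN xp xm]
  apply Finset.sum_congr rfl
  intro p _
  apply Finset.sum_congr rfl
  intro c _
  rw [(GH_closed N p c).1]
end

section
/- Qutrit transition-count determination: let N ≥ 2 and let ψ : Fin (N+1) → Fin 3 be a trajectory with ψ(0) = 0 and ψ(N) = 2. For i, j ∈ Fin 3, let a_{ij} = #{k < N : ψ(k) = i and ψ(k+1) = j}, and let n_j = #{k ≤ N : ψ(k) = j}. Assume the forbidden-transition conditions a_{02} = a_{10} = a_{21} = 0. Then, with c := a_{20}, all remaining counts are determined: a_{00} = n_0 − 1 − c, a_{01} = 1 + c, a_{11} = n_1 − 1 − c, a_{12} = 1 + c, and a_{22} = n_2 − 1 − c. -/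
open scoped BigOperators

/-- Qutrit transition-count determination: for a trajectory from `|0⟩` to `|2⟩` with the
forbidden transitions `0→2`, `1→0`, `2→1` absent, all transition counts are determined by
the occupation numbers `n j` and the feedback count `c = a 2 0`. -/
theorem qutrit_transition_count_determination (N : ℕ) (hN : 2 ≤ N)
    (ψ : Fin (N + 1) → Fin 3) (h0 : ψ 0 = 0) (hlast : ψ (Fin.last N) = 2)
    (a : Fin 3 → Fin 3 → ℕ) (n : Fin 3 → ℕ)
    (ha : ∀ i j, a i j = (Finset.univ.filter
        (fun k : Fin N => ψ k.castSucc = i ∧ ψ k.succ = j)).card)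
    (hn : ∀ j, n j = (Finset.univ.filter (fun k : Fin (N + 1) => ψ k = j)).card)
    (h02 : a 0 2 = 0) (h10 : a 1 0 = 0) (h21 : a 2 1 = 0) :
    a 0 0 = n 0 - 1 - a 2 0 ∧ a 0 1 = 1 + a 2 0 ∧
      a 1 1 = n 1 - 1 - a 2 0 ∧ a 1 2 = 1 + a 2 0 ∧
      a 2 2 = n 2 - 1 - a 2 0 := by
  have tri : ∀ x : Fin 3, x = 0 ∨ x = 1 ∨ x = 2 := by decide
  have hout : ∀ i : Fin 3,
      a i 0 + a i 1 + a i 2 + (if ψ (Fin.last N) = i then 1 else 0) = n i := by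
    intro i
    rw [ha, ha, ha, hn]
    rw [Finset.card_filter, Finset.card_filter, Finset.card_filter, Finset.card_filter]
    rw [Fin.sum_univ_castSucc (f := fun k : Fin (N + 1) => if ψ k = i then 1 else 0)]
    rw [← Finset.sum_add_distrib, ← Finset.sum_add_distrib]
    congr 1
    apply Finset.sum_congr rfl
    intro k _
    rcases tri (ψ k.succ) with h | h | h <;> rw [h] <;>
      rcases em (ψ k.castSucc = i) with h' | h' <;> simp [h']
  have hin : ∀ j : Fin 3,
      (if ψ 0 = j then 1 else 0) + (a 0 j + a 1 j + a 2 j) = n j := by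
    intro j
    rw [ha, ha, ha, hn]
    rw [Finset.card_filter, Finset.card_filter, Finset.card_filter, Finset.card_filter]
    rw [Fin.sum_univ_succ (f := fun k : Fin (N + 1) => if ψ k = j then 1 else 0)]
    rw [← Finset.sum_add_distrib, ← Finset.sum_add_distrib]
    congr 1
    apply Finset.sum_congr rfl
    intro k _
    rcases tri (ψ k.castSucc) with h | h | h <;> rw [h] <;>
      rcases em (ψ k.succ = j) with h' | h' <;> simp [h']
  have e0 := hout 0
  have e1 := hout 1
  have e2 := hout 2
  have f0 := hin 0
  have f1 := hin 1
  have f2 := hin 2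
  rw [hlast] at e0 e1 e2
  rw [h0] at f0 f1 f2
  rw [if_neg (by decide : ¬((2:Fin 3) = 0))] at e0
  rw [if_neg (by decide : ¬((2:Fin 3) = 1))] at e1
  rw [if_pos rfl] at e2
  rw [if_pos rfl] at f0
  rw [if_neg (by decide : ¬((0:Fin 3) = 1))] at f1
  rw [if_neg (by decide : ¬((0:Fin 3) = 2))] at f2
  omega
end

section
/- Qutrit trajectory multiplicity: let N ≥ 2, let n_0, n_1, n_2 ≥ 1 with n_0 + n_1 + n_2 = N + 1, and let c be a natural number with c ≤ min(n_0, n_1, n_2) − 1. The number of trajectories ψ : Fin (N+1) → Fin 3 with ψ(0) = 0, ψ(N) = 2, occupation counts #{k ≤ N : ψ(k) = j} = n_j for j = 0, 1, 2, no steps of the forms 0→2, 1→0, 2→1, and exactly c steps of the form 2→0, equals the product of binomial coefficients C(n_0 − 1, c) · C(n_1 − 1, c) · C(n_2 − 1, c). -/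
open scoped BigOperators

open Finset

abbrev Traj (N : ℕ) (s : Fin 3) (n0 n1 n2 c : ℕ) (ψ : Fin (N + 1) → Fin 3) : Prop :=
  ψ 0 = s ∧ ψ (Fin.last N) = 2 ∧
  (Finset.univ.filter (fun k : Fin (N + 1) => ψ k = 0)).card = n0 ∧
  (Finset.univ.filter (fun k : Fin (N + 1) => ψ k = 1)).card = n1 ∧
  (Finset.univ.filter (fun k : Fin (N + 1) => ψ k = 2)).card = n2 ∧
  (∀ k : Fin N, ¬(ψ k.castSucc = 0 ∧ ψ k.succ = 2)) ∧
  (∀ k : Fin N, ¬(ψ k.castSucc = 1 ∧ ψ k.succ = 0)) ∧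
  (∀ k : Fin N, ¬(ψ k.castSucc = 2 ∧ ψ k.succ = 1)) ∧
  (Finset.univ.filter
    (fun k : Fin N => ψ k.castSucc = 2 ∧ ψ k.succ = 0)).card = c

abbrev cnt (N : ℕ) (s : Fin 3) (n0 n1 n2 c : ℕ) : ℕ :=
  (Finset.univ.filter (fun ψ : Fin (N + 1) → Fin 3 => Traj N s n0 n1 n2 c ψ)).card

def comp3 (n k : ℕ) : ℕ :=
  if n = 0 then (if k = 0 then 1 else 0)
  else if k = 0 then 0 else Nat.choose (n - 1) (k - 1)

lemma comp3_succ_succ (n k : ℕ) :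
    comp3 (n + 1) (k + 1) = comp3 n (k + 1) + comp3 n k := by
  rcases n with _ | m
  · rcases k with _ | j <;> simp [comp3]
  · rcases k with _ | j <;> simp [comp3, Nat.choose_succ_succ] <;> omega

lemma comp3_le {n k : ℕ} (h : comp3 n k ≠ 0) : k ≤ n := by
  unfold comp3 at h
  by_cases hn : n = 0 <;> by_cases hk : k = 0 <;> simp [hn, hk] at h ⊢ <;> try omega
  have := Nat.choose_eq_zero_iff.not.mp h
  omega

lemma count_cons (N : ℕ) (s : Fin 3) (φ : Fin (N + 1) → Fin 3) (j : Fin 3) :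
    (Finset.univ.filter (fun k : Fin (N + 2) =>
        (Fin.cons s φ : Fin (N + 2) → Fin 3) k = j)).card
      = (if s = j then 1 else 0)
        + (Finset.univ.filter (fun k : Fin (N + 1) => φ k = j)).card := by
  rw [Finset.card_filter, Finset.card_filter, Fin.sum_univ_succ]
  simp only [Fin.cons_zero, Fin.cons_succ]

lemma step_cons (N : ℕ) (s : Fin 3) (φ : Fin (N + 1) → Fin 3) (a b : Fin 3) :
    (∀ k : Fin (N + 1), ¬((Fin.cons s φ : Fin (N + 2) → Fin 3) k.castSucc = a ∧
        (Fin.cons s φ : Fin (N + 2) → Fin 3) k.succ = b))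
      ↔ ¬(s = a ∧ φ 0 = b) ∧ ∀ k : Fin N, ¬(φ k.castSucc = a ∧ φ k.succ = b) := by
  rw [Fin.forall_fin_succ]
  simp only [Fin.castSucc_zero, Fin.cons_zero, ← Fin.succ_castSucc, Fin.cons_succ]

lemma fcount_cons (N : ℕ) (s : Fin 3) (φ : Fin (N + 1) → Fin 3) :
    (Finset.univ.filter (fun k : Fin (N + 1) =>
        (Fin.cons s φ : Fin (N + 2) → Fin 3) k.castSucc = 2 ∧
        (Fin.cons s φ : Fin (N + 2) → Fin 3) k.succ = 0)).card
      = (if s = 2 ∧ φ 0 = 0 then 1 else 0)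
        + (Finset.univ.filter (fun k : Fin N => φ k.castSucc = 2 ∧ φ k.succ = 0)).card := by
  rw [Finset.card_filter, Finset.card_filter, Fin.sum_univ_succ]
  simp only [Fin.castSucc_zero, Fin.cons_zero, ← Fin.succ_castSucc, Fin.cons_succ]

lemma last_cons (N : ℕ) (s : Fin 3) (φ : Fin (N + 1) → Fin 3) :
    (Fin.cons s φ : Fin (N + 2) → Fin 3) (Fin.last (N + 1)) = φ (Fin.last N) := by
  rw [← Fin.succ_last, Fin.cons_succ]

lemma cnt_succ (N : ℕ) (s : Fin 3) (n0 n1 n2 c : ℕ) :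
    cnt (N + 1) s n0 n1 n2 c
      = ∑ x : Fin 3, (Finset.univ.filter (fun φ : Fin (N + 1) → Fin 3 =>
          Traj (N + 1) s n0 n1 n2 c (Fin.cons s φ) ∧ φ 0 = x)).card := by
  have hb : cnt (N + 1) s n0 n1 n2 c
      = (Finset.univ.filter (fun φ : Fin (N + 1) → Fin 3 =>
          Traj (N + 1) s n0 n1 n2 c (Fin.cons s φ))).card := by
    refine Finset.card_bij' (fun ψ _ => Fin.tail ψ) (fun φ _ => Fin.cons s φ) ?_ ?_ ?_ ?_
    · intro ψ hψ
      rw [Finset.mem_filter] at hψ ⊢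
      refine ⟨Finset.mem_univ _, ?_⟩
      have hc : Fin.cons s (Fin.tail ψ) = ψ := by
        rw [← hψ.2.1]; exact Fin.cons_self_tail ψ
      rw [hc]
      exact hψ.2
    · intro φ hφ
      rw [Finset.mem_filter] at hφ ⊢
      exact ⟨Finset.mem_univ _, hφ.2⟩
    · intro ψ hψ
      rw [Finset.mem_filter] at hψ
      show Fin.cons s (Fin.tail ψ) = ψ
      conv_lhs => rw [← hψ.2.1]
      exact Fin.cons_self_tail ψ
    · intro φ _
      exact Fin.tail_cons (α := fun _ => Fin 3) s φ
  rw [hb, Finset.card_eq_sum_card_fiberwise (f := fun φ => φ 0) (t := Finset.univ)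
    (fun x _ => Finset.mem_univ _)]
  congr 1
  funext x
  rw [Finset.filter_filter]

lemma fiber_card (N : ℕ) (s x : Fin 3) (n0 n1 n2 c m0 m1 m2 c' : ℕ)
    (hs0 : ¬(s = 0 ∧ x = 2)) (hs1 : ¬(s = 1 ∧ x = 0)) (hs2 : ¬(s = 2 ∧ x = 1))
    (h0 : n0 = (if s = 0 then 1 else 0) + m0)
    (h1 : n1 = (if s = 1 then 1 else 0) + m1)
    (h2 : n2 = (if s = 2 then 1 else 0) + m2)
    (hc : c = (if s = 2 ∧ x = 0 then 1 else 0) + c') :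
    (Finset.univ.filter (fun φ : Fin (N + 1) → Fin 3 =>
        Traj (N + 1) s n0 n1 n2 c (Fin.cons s φ) ∧ φ 0 = x)).card
      = cnt N x m0 m1 m2 c' := by
  subst h0 h1 h2 hc
  refine congrArg Finset.card (Finset.filter_congr ?_)
  intro φ _
  constructor
  · rintro ⟨⟨-, hl, e0, e1, e2, st02, st10, st21, fb⟩, hx⟩
    rw [count_cons] at e0 e1 e2
    rw [step_cons] at st02 st10 st21
    rw [fcount_cons] at fb
    rw [last_cons] at hl
    rw [hx] at fb
    exact ⟨hx, hl, Nat.add_left_cancel e0, Nat.add_left_cancel e1, Nat.add_left_cancel e2,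
      st02.2, st10.2, st21.2, Nat.add_left_cancel fb⟩
  · rintro ⟨hx, hl, e0, e1, e2, st02, st10, st21, fb⟩
    refine ⟨⟨rfl, ?_, ?_, ?_, ?_, ?_, ?_, ?_, ?_⟩, hx⟩
    · rw [last_cons]; exact hl
    · rw [count_cons, e0]
    · rw [count_cons, e1]
    · rw [count_cons, e2]
    · rw [step_cons]
      exact ⟨fun h => hs0 ⟨h.1, hx.symm.trans h.2⟩, st02⟩
    · rw [step_cons]
      exact ⟨fun h => hs1 ⟨h.1, hx.symm.trans h.2⟩, st10⟩
    · rw [step_cons]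
      exact ⟨fun h => hs2 ⟨h.1, hx.symm.trans h.2⟩, st21⟩
    · rw [fcount_cons, hx, fb]

lemma fiber_forbidden (N : ℕ) (s x : Fin 3) (n0 n1 n2 c : ℕ)
    (h : (s = 0 ∧ x = 2) ∨ (s = 1 ∧ x = 0) ∨ (s = 2 ∧ x = 1)) :
    (Finset.univ.filter (fun φ : Fin (N + 1) → Fin 3 =>
        Traj (N + 1) s n0 n1 n2 c (Fin.cons s φ) ∧ φ 0 = x)).card = 0 := by
  rw [Finset.card_eq_zero, Finset.filter_eq_empty_iff]
  rintro φ - ⟨⟨-, -, -, -, -, st02, st10, st21, -⟩, hx⟩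
  rw [step_cons] at st02 st10 st21
  rcases h with ⟨hs, hx2⟩ | ⟨hs, hx2⟩ | ⟨hs, hx2⟩
  · exact st02.1 ⟨hs, hx.trans hx2⟩
  · exact st10.1 ⟨hs, hx.trans hx2⟩
  · exact st21.1 ⟨hs, hx.trans hx2⟩

lemma fiber_feedback_zero (N : ℕ) (n0 n1 n2 : ℕ) :
    (Finset.univ.filter (fun φ : Fin (N + 1) → Fin 3 =>
        Traj (N + 1) 2 n0 n1 n2 0 (Fin.cons 2 φ) ∧ φ 0 = 0)).card = 0 := by
  rw [Finset.card_eq_zero, Finset.filter_eq_empty_iff]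
  rintro φ - ⟨⟨-, -, -, -, -, -, -, -, fb⟩, hx⟩
  rw [fcount_cons, hx] at fb
  simp at fb

lemma cnt_start_zero (N : ℕ) (s : Fin 3) (n0 n1 n2 c : ℕ)
    (h : (s = 0 ∧ n0 = 0) ∨ (s = 1 ∧ n1 = 0) ∨ (s = 2 ∧ n2 = 0)) :
    cnt N s n0 n1 n2 c = 0 := by
  rw [show cnt N s n0 n1 n2 c = _ from rfl, Finset.card_eq_zero,
    Finset.filter_eq_empty_iff]
  rintro ψ - ⟨h0, -, e0, e1, e2, -⟩
  have hmem : ∀ j : Fin 3, ψ 0 = j →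
      0 < (Finset.univ.filter (fun k : Fin (N + 1) => ψ k = j)).card := fun j hj =>
    Finset.card_pos.mpr ⟨0, Finset.mem_filter.mpr ⟨Finset.mem_univ _, hj⟩⟩
  rcases h with ⟨hs, hn⟩ | ⟨hs, hn⟩ | ⟨hs, hn⟩ <;> subst hs
  · have := hmem 0 h0; omega
  · have := hmem 1 h0; omega
  · have := hmem 2 h0; omega

lemma prod3_ne {a b d : ℕ} (h : a * b * d ≠ 0) : a ≠ 0 ∧ b ≠ 0 ∧ d ≠ 0 := by
  refine ⟨?_, ?_, ?_⟩ <;> rintro rfl <;> simp at h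

lemma comp3_zero_left (k : ℕ) : comp3 0 (k + 1) = 0 := by simp [comp3]

lemma key : ∀ (N : ℕ) (s : Fin 3) (n0 n1 n2 c : ℕ), n0 + n1 + n2 = N + 1 →
    cnt N s n0 n1 n2 c
      = comp3 n0 (c + if s = 0 then 1 else 0) * comp3 n1 (c + if s = 2 then 0 else 1)
          * comp3 n2 (c + 1) := by
  intro N
  induction N with
  | zero =>
    intro s n0 n1 n2 c hsum
    obtain hs | hs | hs : s = 0 ∨ s = 1 ∨ s = 2 := by fin_cases s <;> simp
    all_goals subst hs
    all_goals simp only [eq_self_iff_true, show ¬(0:Fin 3) = 2 from by decide,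
      show ¬(0:Fin 3) = 1 from by decide, show ¬(1:Fin 3) = 0 from by decide,
      show ¬(1:Fin 3) = 2 from by decide, show ¬(2:Fin 3) = 0 from by decide,
      show ¬(2:Fin 3) = 1 from by decide, if_true, if_false, and_true, true_and,
      and_false, false_and, Nat.add_zero]
    · -- s = 0 : empty since ψ 0 = 0 ≠ 2 = ψ (last 0)
      have hz : cnt 0 0 n0 n1 n2 c = 0 := by
        rw [show cnt 0 0 n0 n1 n2 c = _ from rfl, Finset.card_eq_zero,
          Finset.filter_eq_empty_iff]
        rintro ψ - ⟨h0, hl, -⟩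
        rw [show Fin.last 0 = 0 from rfl, h0] at hl
        exact absurd hl (by decide)
      rw [hz]
      by_contra hne
      replace hne : comp3 n0 (c+1) * comp3 n1 (c+1) * comp3 n2 (c+1) ≠ 0 :=
        fun h => hne h.symm
      obtain ⟨c0, c1, c2⟩ := prod3_ne hne
      have := comp3_le c0; have := comp3_le c1; have := comp3_le c2
      omega
    · -- s = 1
      have hz : cnt 0 1 n0 n1 n2 c = 0 := by
        rw [show cnt 0 1 n0 n1 n2 c = _ from rfl, Finset.card_eq_zero,
          Finset.filter_eq_empty_iff]
        rintro ψ - ⟨h0, hl, -⟩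
        rw [show Fin.last 0 = 0 from rfl, h0] at hl
        exact absurd hl (by decide)
      rw [hz]
      by_contra hne
      replace hne : comp3 n0 c * comp3 n1 (c+1) * comp3 n2 (c+1) ≠ 0 :=
        fun h => hne h.symm
      obtain ⟨c0, c1, c2⟩ := prod3_ne hne
      have := comp3_le c1; have := comp3_le c2
      omega
    · -- s = 2
      by_cases hcond : n0 = 0 ∧ n1 = 0 ∧ n2 = 1 ∧ c = 0
      · obtain ⟨rfl, rfl, rfl, rfl⟩ := hcond
        have hL : cnt 0 2 0 0 1 0 = 1 := ?_
        · rw [hL]; decide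
        rw [show cnt 0 2 0 0 1 0
            = (Finset.univ.filter (fun ψ : Fin 1 → Fin 3 => Traj 0 2 0 0 1 0 ψ)).card
          from rfl]
        rw [show (Finset.univ.filter (fun ψ : Fin 1 → Fin 3 => Traj 0 2 0 0 1 0 ψ))
            = {fun _ => 2} from ?_]
        · simp
        · ext ψ
          simp only [Finset.mem_filter, Finset.mem_univ, true_and, Finset.mem_singleton]
          constructor
          · rintro ⟨h0, -⟩
            funext k
            rw [Subsingleton.elim k 0, h0]
          · rintro rfl
            refine ⟨rfl, rfl, ?_, ?_, ?_, ?_, ?_, ?_, ?_⟩ <;>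
              first
                | (intro k; exact absurd k.pos (by simp))
                | (rw [Finset.card_filter, Fin.sum_univ_one]; decide)
                | rfl
                | simp
      · have hz : cnt 0 2 n0 n1 n2 c = 0 := by
          rw [show cnt 0 2 n0 n1 n2 c = _ from rfl, Finset.card_eq_zero,
            Finset.filter_eq_empty_iff]
          rintro ψ - ⟨h0, -, e0, e1, e2, -, -, -, ec⟩
          apply hcond
          rw [Finset.card_filter, Fin.sum_univ_one, h0] at e0 e1 e2
          simp only [show (if (2:Fin 3) = 0 then (1:ℕ) else 0) = 0 from rfl,
            show (if (2:Fin 3) = 1 then (1:ℕ) else 0) = 0 from rfl,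
            show (if (2:Fin 3) = 2 then (1:ℕ) else 0) = 1 from rfl] at e0 e1 e2
          refine ⟨e0.symm, e1.symm, e2.symm, ?_⟩
          rw [← ec]
          rfl
        rw [hz]
        by_contra hne
        replace hne : comp3 n0 c * comp3 n1 c * comp3 n2 (c+1) ≠ 0 :=
          fun h => hne h.symm
        obtain ⟨c0, c1, c2⟩ := prod3_ne hne
        have h0' := comp3_le c0
        have h1' := comp3_le c1
        have h2' := comp3_le c2
        exact hcond ⟨by omega, by omega, by omega, by omega⟩
  | succ N ih =>
    intro s n0 n1 n2 c hsum
    obtain hs | hs | hs : s = 0 ∨ s = 1 ∨ s = 2 := by fin_cases s <;> simp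
    all_goals subst hs
    all_goals simp only [eq_self_iff_true, show ¬(0:Fin 3) = 2 from by decide,
      show ¬(0:Fin 3) = 1 from by decide, show ¬(1:Fin 3) = 0 from by decide,
      show ¬(1:Fin 3) = 2 from by decide, show ¬(2:Fin 3) = 0 from by decide,
      show ¬(2:Fin 3) = 1 from by decide, if_true, if_false, and_true, true_and,
      and_false, false_and, Nat.add_zero]
    · -- s = 0
      rcases n0 with _ | m0
      · rw [cnt_start_zero _ _ _ _ _ _ (Or.inl ⟨rfl, rfl⟩)]
        simp [comp3]
      · rw [cnt_succ, Fin.sum_univ_three]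
        rw [fiber_card N 0 0 _ _ _ _ m0 n1 n2 c (by decide) (by decide) (by decide)
          (by simp only [eq_self_iff_true, show ¬(0:Fin 3) = 2 from by decide, show ¬(0:Fin 3) = 1 from by decide, show ¬(1:Fin 3) = 0 from by decide, show ¬(1:Fin 3) = 2 from by decide, show ¬(2:Fin 3) = 0 from by decide, show ¬(2:Fin 3) = 1 from by decide, if_true, if_false, and_true, true_and, and_false, false_and, Nat.add_zero]; try omega) (by simp only [eq_self_iff_true, show ¬(0:Fin 3) = 2 from by decide, show ¬(0:Fin 3) = 1 from by decide, show ¬(1:Fin 3) = 0 from by decide, show ¬(1:Fin 3) = 2 from by decide, show ¬(2:Fin 3) = 0 from by decide, show ¬(2:Fin 3) = 1 from by decide, if_true, if_false, and_true, true_and, and_false, false_and, Nat.add_zero]; try omega) (by simp only [eq_self_iff_true, show ¬(0:Fin 3) = 2 from by decide, show ¬(0:Fin 3) = 1 from by decide, show ¬(1:Fin 3) = 0 from by decide, show ¬(1:Fin 3) = 2 from by decide, show ¬(2:Fin 3) = 0 from by decide, show ¬(2:Fin 3) = 1 from by decide, if_true, if_false, and_true, true_and, and_false, false_and, Nat.add_zero];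 try omega) (by simp only [eq_self_iff_true, show ¬(0:Fin 3) = 2 from by decide, show ¬(0:Fin 3) = 1 from by decide, show ¬(1:Fin 3) = 0 from by decide, show ¬(1:Fin 3) = 2 from by decide, show ¬(2:Fin 3) = 0 from by decide, show ¬(2:Fin 3) = 1 from by decide, if_true, if_false, and_true, true_and, and_false, false_and, Nat.add_zero]; try omega)]
        rw [fiber_card N 0 1 _ _ _ _ m0 n1 n2 c (by decide) (by decide) (by decide)
          (by simp only [eq_self_iff_true, show ¬(0:Fin 3) = 2 from by decide, show ¬(0:Fin 3) = 1 from by decide, show ¬(1:Fin 3) = 0 from by decide, show ¬(1:Fin 3) = 2 from by decide, show ¬(2:Fin 3) = 0 from by decide, show ¬(2:Fin 3) = 1 from by decide, if_true, if_false, and_true, true_and, and_false, false_and, Nat.add_zero]; try omega) (by simp only [eq_self_iff_true, show ¬(0:Fin 3) = 2 from by decide, show ¬(0:Fin 3) = 1 from by decide, show ¬(1:Fin 3) = 0 from by decide, show ¬(1:Fin 3) = 2 from by decide, show ¬(2:Fin 3) = 0 from by decide, show ¬(2:Fin 3) = 1 from by decide, if_true, if_false, and_true, true_and, and_false, false_and,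 Nat.add_zero]; try omega) (by simp only [eq_self_iff_true, show ¬(0:Fin 3) = 2 from by decide, show ¬(0:Fin 3) = 1 from by decide, show ¬(1:Fin 3) = 0 from by decide, show ¬(1:Fin 3) = 2 from by decide, show ¬(2:Fin 3) = 0 from by decide, show ¬(2:Fin 3) = 1 from by decide, if_true, if_false, and_true, true_and, and_false, false_and, Nat.add_zero]; try omega) (by simp only [eq_self_iff_true, show ¬(0:Fin 3) = 2 from by decide, show ¬(0:Fin 3) = 1 from by decide, show ¬(1:Fin 3) = 0 from by decide, show ¬(1:Fin 3) = 2 from by decide, show ¬(2:Fin 3) = 0 from by decide, show ¬(2:Fin 3) = 1 from by decide, if_true, if_false, and_true, true_and, and_false, false_and, Nat.add_zero]; try omega)]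
        rw [fiber_forbidden N 0 2 _ _ _ _ (Or.inl ⟨rfl, rfl⟩)]
        rw [ih 0 m0 n1 n2 c (by omega), ih 1 m0 n1 n2 c (by omega)]
        simp only [eq_self_iff_true, show ¬(0:Fin 3) = 2 from by decide,
      show ¬(0:Fin 3) = 1 from by decide, show ¬(1:Fin 3) = 0 from by decide,
      show ¬(1:Fin 3) = 2 from by decide, show ¬(2:Fin 3) = 0 from by decide,
      show ¬(2:Fin 3) = 1 from by decide, if_true, if_false, and_true, true_and,
      and_false, false_and, Nat.add_zero]
        rw [comp3_succ_succ]
        ring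
    · -- s = 1
      rcases n1 with _ | m1
      · rw [cnt_start_zero _ _ _ _ _ _ (Or.inr (Or.inl ⟨rfl, rfl⟩))]
        simp [comp3]
      · rw [cnt_succ, Fin.sum_univ_three]
        rw [fiber_forbidden N 1 0 _ _ _ _ (Or.inr (Or.inl ⟨rfl, rfl⟩))]
        rw [fiber_card N 1 1 _ _ _ _ n0 m1 n2 c (by decide) (by decide) (by decide)
          (by simp only [eq_self_iff_true, show ¬(0:Fin 3) = 2 from by decide, show ¬(0:Fin 3) = 1 from by decide, show ¬(1:Fin 3) = 0 from by decide, show ¬(1:Fin 3) = 2 from by decide, show ¬(2:Fin 3) = 0 from by decide, show ¬(2:Fin 3) = 1 from by decide, if_true, if_false, and_true, true_and, and_false, false_and, Nat.add_zero]; try omega) (by simp only [eq_self_iff_true, show ¬(0:Fin 3) = 2 from by decide, show ¬(0:Fin 3) = 1 from by decide, show ¬(1:Fin 3) = 0 from by decide, show ¬(1:Fin 3) = 2 from by decide, show ¬(2:Fin 3) = 0 from by decide, show ¬(2:Fin 3) = 1 from by decide, if_true, if_false, and_true, true_and, and_false, false_and, Nat.add_zero]; try omega) (by simp only [eq_self_iff_true,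 show ¬(0:Fin 3) = 2 from by decide, show ¬(0:Fin 3) = 1 from by decide, show ¬(1:Fin 3) = 0 from by decide, show ¬(1:Fin 3) = 2 from by decide, show ¬(2:Fin 3) = 0 from by decide, show ¬(2:Fin 3) = 1 from by decide, if_true, if_false, and_true, true_and, and_false, false_and, Nat.add_zero]; try omega) (by simp only [eq_self_iff_true, show ¬(0:Fin 3) = 2 from by decide, show ¬(0:Fin 3) = 1 from by decide, show ¬(1:Fin 3) = 0 from by decide, show ¬(1:Fin 3) = 2 from by decide, show ¬(2:Fin 3) = 0 from by decide, show ¬(2:Fin 3) = 1 from by decide, if_true, if_false, and_true, true_and, and_false, false_and, Nat.add_zero]; try omega)]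
        rw [fiber_card N 1 2 _ _ _ _ n0 m1 n2 c (by decide) (by decide) (by decide)
          (by simp only [eq_self_iff_true, show ¬(0:Fin 3) = 2 from by decide, show ¬(0:Fin 3) = 1 from by decide, show ¬(1:Fin 3) = 0 from by decide, show ¬(1:Fin 3) = 2 from by decide, show ¬(2:Fin 3) = 0 from by decide, show ¬(2:Fin 3) = 1 from by decide, if_true, if_false, and_true, true_and, and_false, false_and, Nat.add_zero]; try omega) (by simp only [eq_self_iff_true, show ¬(0:Fin 3) = 2 from by decide, show ¬(0:Fin 3) = 1 from by decide, show ¬(1:Fin 3) = 0 from by decide, show ¬(1:Fin 3) = 2 from by decide, show ¬(2:Fin 3) = 0 from by decide, show ¬(2:Fin 3) = 1 from by decide, if_true, if_false, and_true, true_and, and_false, false_and, Nat.add_zero]; try omega) (by simp only [eq_self_iff_true, show ¬(0:Fin 3) = 2 from by decide, show ¬(0:Fin 3) = 1 from by decide, show ¬(1:Fin 3) = 0 from by decide, show ¬(1:Fin 3) = 2 from by decide, show ¬(2:Fin 3) = 0 from by decide, show ¬(2:Fin 3) = 1 from by decide, if_true, if_false, and_true, true_and, and_false, false_and, Nat.add_zero];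 try omega) (by simp only [eq_self_iff_true, show ¬(0:Fin 3) = 2 from by decide, show ¬(0:Fin 3) = 1 from by decide, show ¬(1:Fin 3) = 0 from by decide, show ¬(1:Fin 3) = 2 from by decide, show ¬(2:Fin 3) = 0 from by decide, show ¬(2:Fin 3) = 1 from by decide, if_true, if_false, and_true, true_and, and_false, false_and, Nat.add_zero]; try omega)]
        rw [ih 1 n0 m1 n2 c (by omega), ih 2 n0 m1 n2 c (by omega)]
        simp only [eq_self_iff_true, show ¬(0:Fin 3) = 2 from by decide,
      show ¬(0:Fin 3) = 1 from by decide, show ¬(1:Fin 3) = 0 from by decide,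
      show ¬(1:Fin 3) = 2 from by decide, show ¬(2:Fin 3) = 0 from by decide,
      show ¬(2:Fin 3) = 1 from by decide, if_true, if_false, and_true, true_and,
      and_false, false_and, Nat.add_zero]
        rw [comp3_succ_succ]
        ring
    · -- s = 2
      rcases n2 with _ | m2
      · rw [cnt_start_zero _ _ _ _ _ _ (Or.inr (Or.inr ⟨rfl, rfl⟩))]
        simp [comp3]
      · rcases c with _ | c'
        · rw [cnt_succ, Fin.sum_univ_three]
          rw [fiber_feedback_zero]
          rw [fiber_forbidden N 2 1 _ _ _ _ (Or.inr (Or.inr ⟨rfl, rfl⟩))]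
          rw [fiber_card N 2 2 _ _ _ _ n0 n1 m2 0 (by decide) (by decide) (by decide)
            (by simp only [eq_self_iff_true, show ¬(0:Fin 3) = 2 from by decide, show ¬(0:Fin 3) = 1 from by decide, show ¬(1:Fin 3) = 0 from by decide, show ¬(1:Fin 3) = 2 from by decide, show ¬(2:Fin 3) = 0 from by decide, show ¬(2:Fin 3) = 1 from by decide, if_true, if_false, and_true, true_and, and_false, false_and, Nat.add_zero]; try omega) (by simp only [eq_self_iff_true, show ¬(0:Fin 3) = 2 from by decide, show ¬(0:Fin 3) = 1 from by decide, show ¬(1:Fin 3) = 0 from by decide, show ¬(1:Fin 3) = 2 from by decide, show ¬(2:Fin 3) = 0 from by decide, show ¬(2:Fin 3) = 1 from by decide, if_true, if_false, and_true, true_and, and_false, false_and, Nat.add_zero]; try omega) (by simp only [eq_self_iff_true, show ¬(0:Fin 3) = 2 from by decide, show ¬(0:Fin 3) = 1 from by decide, show ¬(1:Fin 3) = 0 from by decide, show ¬(1:Fin 3) = 2 from by decide, show ¬(2:Fin 3) = 0 from by decide, show ¬(2:Fin 3) = 1 from by decide, if_true, if_false, and_true, true_and, and_false, false_and, Nat.add_zero];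 try omega) (by simp only [eq_self_iff_true, show ¬(0:Fin 3) = 2 from by decide, show ¬(0:Fin 3) = 1 from by decide, show ¬(1:Fin 3) = 0 from by decide, show ¬(1:Fin 3) = 2 from by decide, show ¬(2:Fin 3) = 0 from by decide, show ¬(2:Fin 3) = 1 from by decide, if_true, if_false, and_true, true_and, and_false, false_and, Nat.add_zero]; try omega)]
          rw [ih 2 n0 n1 m2 0 (by omega)]
          simp only [eq_self_iff_true, show ¬(0:Fin 3) = 2 from by decide,
      show ¬(0:Fin 3) = 1 from by decide, show ¬(1:Fin 3) = 0 from by decide,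
      show ¬(1:Fin 3) = 2 from by decide, show ¬(2:Fin 3) = 0 from by decide,
      show ¬(2:Fin 3) = 1 from by decide, if_true, if_false, and_true, true_and,
      and_false, false_and, Nat.add_zero]
          by_cases hn0 : n0 = 0
          · by_cases hn1 : n1 = 0
            · subst hn0 hn1
              have hm2 : m2 = N + 1 := by omega
              subst hm2
              simp [comp3]
            · simp [comp3, hn1]
          · simp [comp3, hn0]
        · rw [cnt_succ, Fin.sum_univ_three]
          rw [fiber_card N 2 0 _ _ _ _ n0 n1 m2 c' (by decide) (by decide) (by decide)
            (by simp only [eq_self_iff_true, show ¬(0:Fin 3) = 2 from by decide, show ¬(0:Fin 3) = 1 from by decide, show ¬(1:Fin 3) = 0 from by decide, show ¬(1:Fin 3) = 2 from by decide, show ¬(2:Fin 3) = 0 from by decide, show ¬(2:Fin 3) = 1 from by decide, if_true, if_false, and_true, true_and, and_false, false_and, Nat.add_zero]; try omega) (by simp only [eq_self_iff_true, show ¬(0:Fin 3) = 2 from by decide, show ¬(0:Fin 3) = 1 from by decide, show ¬(1:Fin 3) = 0 from by decide, show ¬(1:Fin 3) = 2 from by decide, show ¬(2:Fin 3) = 0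 from by decide, show ¬(2:Fin 3) = 1 from by decide, if_true, if_false, and_true, true_and, and_false, false_and, Nat.add_zero]; try omega) (by simp only [eq_self_iff_true, show ¬(0:Fin 3) = 2 from by decide, show ¬(0:Fin 3) = 1 from by decide, show ¬(1:Fin 3) = 0 from by decide, show ¬(1:Fin 3) = 2 from by decide, show ¬(2:Fin 3) = 0 from by decide, show ¬(2:Fin 3) = 1 from by decide, if_true, if_false, and_true, true_and, and_false, false_and, Nat.add_zero]; try omega) (by simp only [eq_self_iff_true, show ¬(0:Fin 3) = 2 from by decide, show ¬(0:Fin 3) = 1 from by decide, show ¬(1:Fin 3) = 0 from by decide, show ¬(1:Fin 3) = 2 from by decide, show ¬(2:Fin 3) = 0 from by decide, show ¬(2:Fin 3) = 1 from by decide, if_true, if_false, and_true, true_and, and_false, false_and, Nat.add_zero]; try omega)]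
          rw [fiber_forbidden N 2 1 _ _ _ _ (Or.inr (Or.inr ⟨rfl, rfl⟩))]
          rw [fiber_card N 2 2 _ _ _ _ n0 n1 m2 (c' + 1) (by decide) (by decide) (by decide)
            (by simp only [eq_self_iff_true, show ¬(0:Fin 3) = 2 from by decide, show ¬(0:Fin 3) = 1 from by decide, show ¬(1:Fin 3) = 0 from by decide, show ¬(1:Fin 3) = 2 from by decide, show ¬(2:Fin 3) = 0 from by decide, show ¬(2:Fin 3) = 1 from by decide, if_true, if_false, and_true, true_and, and_false, false_and, Nat.add_zero]; try omega) (by simp only [eq_self_iff_true, show ¬(0:Fin 3) = 2 from by decide, show ¬(0:Fin 3) = 1 from by decide, show ¬(1:Fin 3) = 0 from by decide, show ¬(1:Fin 3) = 2 from by decide, show ¬(2:Fin 3) = 0 from by decide, show ¬(2:Fin 3) = 1 from by decide, if_true, if_false, and_true, true_and, and_false, false_and, Nat.add_zero]; try omega) (by simp only [eq_self_iff_true, show ¬(0:Fin 3) = 2 from by decide, show ¬(0:Fin 3) = 1 from by decide, show ¬(1:Fin 3) = 0 from by decide, show ¬(1:Fin 3) = 2 from by decide, show ¬(2:Fin 3)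 = 0 from by decide, show ¬(2:Fin 3) = 1 from by decide, if_true, if_false, and_true, true_and, and_false, false_and, Nat.add_zero]; try omega) (by simp only [eq_self_iff_true, show ¬(0:Fin 3) = 2 from by decide, show ¬(0:Fin 3) = 1 from by decide, show ¬(1:Fin 3) = 0 from by decide, show ¬(1:Fin 3) = 2 from by decide, show ¬(2:Fin 3) = 0 from by decide, show ¬(2:Fin 3) = 1 from by decide, if_true, if_false, and_true, true_and, and_false, false_and, Nat.add_zero]; try omega)]
          rw [ih 0 n0 n1 m2 c' (by omega), ih 2 n0 n1 m2 (c' + 1) (by omega)]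
          simp only [eq_self_iff_true, show ¬(0:Fin 3) = 2 from by decide,
      show ¬(0:Fin 3) = 1 from by decide, show ¬(1:Fin 3) = 0 from by decide,
      show ¬(1:Fin 3) = 2 from by decide, show ¬(2:Fin 3) = 0 from by decide,
      show ¬(2:Fin 3) = 1 from by decide, if_true, if_false, and_true, true_and,
      and_false, false_and, Nat.add_zero]
          rw [comp3_succ_succ]
          ring

lemma comp3_choose {n : ℕ} (c : ℕ) (hn : 1 ≤ n) : comp3 n (c + 1) = (n - 1).choose c := by
  unfold comp3
  rw [if_neg (by omega), if_neg (by omega), Nat.add_sub_cancel]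

/-- Qutrit trajectory multiplicity: the number of trajectories `ψ : Fin (N+1) → Fin 3`
from `0` to `2` with occupation counts `n₀, n₁, n₂`, no forbidden steps `0→2`, `1→0`,
`2→1`, and exactly `c` feedback steps `2→0`, equals
`C(n₀−1, c) · C(n₁−1, c) · C(n₂−1, c)`. -/
theorem qutrit_multiplicity (N n0 n1 n2 c : ℕ) (hN : 2 ≤ N)
    (h0 : 1 ≤ n0) (h1 : 1 ≤ n1) (h2 : 1 ≤ n2) (hsum : n0 + n1 + n2 = N + 1)
    (hc : c ≤ min n0 (min n1 n2) - 1) :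
    (Finset.univ.filter (fun ψ : Fin (N + 1) → Fin 3 =>
        ψ 0 = 0 ∧ ψ (Fin.last N) = 2 ∧
        (Finset.univ.filter (fun k : Fin (N + 1) => ψ k = 0)).card = n0 ∧
        (Finset.univ.filter (fun k : Fin (N + 1) => ψ k = 1)).card = n1 ∧
        (Finset.univ.filter (fun k : Fin (N + 1) => ψ k = 2)).card = n2 ∧
        (∀ k : Fin N, ¬(ψ k.castSucc = 0 ∧ ψ k.succ = 2)) ∧
        (∀ k : Fin N, ¬(ψ k.castSucc = 1 ∧ ψ k.succ = 0)) ∧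
        (∀ k : Fin N, ¬(ψ k.castSucc = 2 ∧ ψ k.succ = 1)) ∧
        (Finset.univ.filter
          (fun k : Fin N => ψ k.castSucc = 2 ∧ ψ k.succ = 0)).card = c)).card
      = Nat.choose (n0 - 1) c * Nat.choose (n1 - 1) c * Nat.choose (n2 - 1) c := by
  have h := key N 0 n0 n1 n2 c hsum
  simp only [eq_self_iff_true, show ¬(0:Fin 3) = 2 from by decide, if_true, if_false,
    Nat.add_zero] at h
  rw [comp3_choose c h0, comp3_choose c h1, comp3_choose c h2] at h
  exact h
end

section
/- ε-independence of the qutrit common-rotation expected return: let N ≥ 2 and x ∈ ℝ. For ε ∈ ℝ define J_ε(x) = Σ_{n₀=1}^{N−1} Σ_{n₂=1}^{N−n₀} Σ_{c=0}^{min(n₀, N+1−n₀−n₂, n₂)−1} C(n₀−1, c)·C(N−n₀−n₂, c)·C(n₂−1, c) · [ (ε(N+1−2n₀−n₂) − (N+2−n₀−2n₂))·x + 1 ] · (1−x)^{N−3c−2} · x^{3c+2}. Then for every ε, J_ε(x) = Σ_{n₀=1}^{N−1} Σ_{n₂=1}^{N−n₀} Σ_{c=0}^{min(n₀, N+1−n₀−n₂,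 n₂)−1} C(n₀−1, c)·C(N−n₀−n₂, c)·C(n₂−1, c) · [ (n₀ + 2n₂ − N − 2)·x + 1 ] · (1−x)^{N−3c−2} · x^{3c+2}; in particular J_ε(x) is independent of ε. -/
open scoped BigOperators

/-- The ε-free "base" summand: binomial weights times the x-powers. -/
def qbase (N : ℕ) (x : ℝ) (n0 n2 : ℕ) : ℝ :=
  ∑ c ∈ Finset.range (min n0 (min (N + 1 - n0 - n2) n2)),
    ((Nat.choose (n0 - 1) c * Nat.choose (N - n0 - n2) c
        * Nat.choose (n2 - 1) c : ℕ) : ℝ)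
      * (1 - x) ^ (N - 3 * c - 2) * x ^ (3 * c + 2)

lemma qbase_symm (N : ℕ) (x : ℝ) (n0 n2 : ℕ) (h1 : 1 ≤ n0) (h2 : 1 ≤ n2)
    (h3 : n0 + n2 ≤ N) : qbase N x (N + 1 - n0 - n2) n2 = qbase N x n0 n2 := by
  unfold qbase
  have e1 : N + 1 - (N + 1 - n0 - n2) - n2 = n0 := by omega
  have e2 : N - (N + 1 - n0 - n2) - n2 = n0 - 1 := by omega
  have e3 : (N + 1 - n0 - n2) - 1 = N - n0 - n2 := by omega
  rw [e1, e2, e3, min_left_comm]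
  exact Finset.sum_congr rfl fun c _ => by push_cast; ring

lemma qkey (N : ℕ) (hN : 2 ≤ N) (x : ℝ) :
    ∑ n0 ∈ Finset.Icc 1 (N - 1), ∑ n2 ∈ Finset.Icc 1 (N - n0),
      ((N : ℝ) + 1 - 2 * (n0 : ℝ) - (n2 : ℝ)) * qbase N x n0 n2 = 0 := by
  rw [Finset.sum_sigma']
  refine Finset.sum_involution (fun p _ => ⟨N + 1 - p.1 - p.2, p.2⟩) ?_ ?_ ?_ ?_
  · rintro ⟨n0, n2⟩ hp
    simp only [Finset.mem_sigma, Finset.mem_Icc] at hp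
    obtain ⟨⟨ha, hb⟩, hc, hd⟩ := hp
    have h3 : n0 + n2 ≤ N := by omega
    simp only
    rw [qbase_symm N x n0 n2 ha hc h3]
    have hm : ((N + 1 - n0 - n2 : ℕ) : ℝ) = (N : ℝ) + 1 - n0 - n2 := by
      have : (N + 1 - n0 - n2) + n0 + n2 = N + 1 := by omega
      have := congrArg (fun k : ℕ => (k : ℝ)) this
      push_cast at this
      linarith
    rw [hm]; ring
  · rintro ⟨n0, n2⟩ hp hf
    simp only [Finset.mem_sigma, Finset.mem_Icc] at hp
    obtain ⟨⟨ha, hb⟩, hc, hd⟩ := hp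
    intro h
    have hfst : N + 1 - n0 - n2 = n0 := congrArg Sigma.fst h
    have : (N : ℝ) + 1 - 2 * (n0 : ℝ) - (n2 : ℝ) = 0 := by
      have h2 : 2 * n0 + n2 = N + 1 := by omega
      have := congrArg (fun k : ℕ => (k : ℝ)) h2
      push_cast at this
      linarith
    simp only [this, zero_mul, ne_eq, not_true_eq_false] at hf
  · rintro ⟨n0, n2⟩ hp
    simp only [Finset.mem_sigma, Finset.mem_Icc] at hp ⊢
    omega
  · rintro ⟨n0, n2⟩ hp
    simp only [Finset.mem_sigma, Finset.mem_Icc] at hp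
    have : N + 1 - (N + 1 - n0 - n2) - n2 = n0 := by omega
    simp [this]

/-- ε-independence of the qutrit common-rotation expected return: the ε-dependent
expression for `J_ε(x)` equals the manifestly ε-free expression, for every `ε`. -/
theorem qutrit_common_rotation_eps_independence (N : ℕ) (hN : 2 ≤ N) (x ε : ℝ) :
    (∑ n0 ∈ Finset.Icc 1 (N - 1), ∑ n2 ∈ Finset.Icc 1 (N - n0),
        ∑ c ∈ Finset.range (min n0 (min (N + 1 - n0 - n2) n2)),
          ((Nat.choose (n0 - 1) c * Nat.choose (N - n0 - n2) c
              * Nat.choose (n2 - 1) c : ℕ) : ℝ)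
            * ((ε * ((N : ℝ) + 1 - 2 * (n0 : ℝ) - (n2 : ℝ))
                  - ((N : ℝ) + 2 - (n0 : ℝ) - 2 * (n2 : ℝ))) * x + 1)
            * (1 - x) ^ (N - 3 * c - 2) * x ^ (3 * c + 2))
    = ∑ n0 ∈ Finset.Icc 1 (N - 1), ∑ n2 ∈ Finset.Icc 1 (N - n0),
        ∑ c ∈ Finset.range (min n0 (min (N + 1 - n0 - n2) n2)),
          ((Nat.choose (n0 - 1) c * Nat.choose (N - n0 - n2) c
              * Nat.choose (n2 - 1) c : ℕ) : ℝ)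
            * (((n0 : ℝ) + 2 * (n2 : ℝ) - (N : ℝ) - 2) * x + 1)
            * (1 - x) ^ (N - 3 * c - 2) * x ^ (3 * c + 2) := by
  have inner : ∀ n0 n2 : ℕ,
      (∑ c ∈ Finset.range (min n0 (min (N + 1 - n0 - n2) n2)),
          ((Nat.choose (n0 - 1) c * Nat.choose (N - n0 - n2) c
              * Nat.choose (n2 - 1) c : ℕ) : ℝ)
            * ((ε * ((N : ℝ) + 1 - 2 * (n0 : ℝ) - (n2 : ℝ))
                  - ((N : ℝ) + 2 - (n0 : ℝ) - 2 * (n2 : ℝ))) * x + 1)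
            * (1 - x) ^ (N - 3 * c - 2) * x ^ (3 * c + 2))
      = (∑ c ∈ Finset.range (min n0 (min (N + 1 - n0 - n2) n2)),
          ((Nat.choose (n0 - 1) c * Nat.choose (N - n0 - n2) c
              * Nat.choose (n2 - 1) c : ℕ) : ℝ)
            * (((n0 : ℝ) + 2 * (n2 : ℝ) - (N : ℝ) - 2) * x + 1)
            * (1 - x) ^ (N - 3 * c - 2) * x ^ (3 * c + 2))
        + ε * x * (((N : ℝ) + 1 - 2 * (n0 : ℝ) - (n2 : ℝ)) * qbase N x n0 n2) := by
    intro n0 n2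
    unfold qbase
    simp only [Finset.mul_sum, ← Finset.sum_add_distrib]
    exact Finset.sum_congr rfl fun c _ => by ring
  calc _ = (∑ n0 ∈ Finset.Icc 1 (N - 1), ∑ n2 ∈ Finset.Icc 1 (N - n0),
        ∑ c ∈ Finset.range (min n0 (min (N + 1 - n0 - n2) n2)),
          ((Nat.choose (n0 - 1) c * Nat.choose (N - n0 - n2) c
              * Nat.choose (n2 - 1) c : ℕ) : ℝ)
            * (((n0 : ℝ) + 2 * (n2 : ℝ) - (N : ℝ) - 2) * x + 1)
            * (1 - x) ^ (N - 3 * c - 2) * x ^ (3 * c + 2))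
      + ε * x * (∑ n0 ∈ Finset.Icc 1 (N - 1), ∑ n2 ∈ Finset.Icc 1 (N - n0),
          ((N : ℝ) + 1 - 2 * (n0 : ℝ) - (n2 : ℝ)) * qbase N x n0 n2) := by
        simp only [inner, Finset.sum_add_distrib, Finset.mul_sum]
    _ = _ := by rw [qkey N hN x, mul_zero, add_zero]
end

section
/- Brute-force equals analytic formula for the qutrit common-rotation model: let N ≥ 2, x ∈ ℝ and ε ∈ ℝ. Define step weights q on Fin 3 × Fin 3 by q(0,0) = 1−x, q(0,1) = x, q(1,1) = 1−x, q(1,2) = x, q(2,0) = x, q(2,2) = 1−x, and q(i,j) = 0 for the remaining pairs; define step rewards r by r(0,0) = −εx, r(0,1) = ε(1−x), r(1,1) = −(1−ε)x, r(1,2) = (1−ε)(1−x), r(2,0) = −(1−x), r(2,2) = x (values of r on pairs with q = 0 are irrelevant, e.g. set to 0). Then Σ over all trajectories ψ : Fin (N+1) → Fin 3 with ψ(0) = 0 and ψ(N) = 2 of [ (Σ_{k<N} r(ψ(k), ψ(k+1))) · ∏_{k<N} q(ψ(k), ψ(k+1)) ] equals Σ_{n₀=1}^{N−1} Σ_{n₂=1}^{N−n₀}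 Σ_{c=0}^{min(n₀, N+1−n₀−n₂, n₂)−1} C(n₀−1, c)·C(N−n₀−n₂, c)·C(n₂−1, c)·[ (n₀ + 2n₂ − N − 2)·x + 1 ]·(1−x)^{N−3c−2}·x^{3c+2}. In particular the left-hand side, nominally a sum over 3^{N−1} trajectories, equals an ε-independent sum of O(N³) terms. -/
open scoped BigOperators

/-- Step transition probabilities `q(i,j) = |⟨j|π_i|i⟩|²` of the qutrit ladder model with
common rotation parameter `x = sin²θ`: nonzero only on the allowed transitions
`0→0, 0→1, 1→1, 1→2, 2→0, 2→2`. -/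
noncomputable def qutritQ (x : ℝ) : Matrix (Fin 3) (Fin 3) ℝ :=
  !![1 - x, x, 0;
     0, 1 - x, x;
     x, 0, 1 - x]

/-- Step rewards `r(i,j) = E_j − ⟨π_i i|H|π_i i⟩` of the qutrit ladder model with energies
`E₀ = 0`, `E₁ = ε`, `E₂ = 1` and common rotation parameter `x` (set to `0` on the
forbidden transitions, where `q = 0`). -/
noncomputable def qutritR (ε x : ℝ) : Matrix (Fin 3) (Fin 3) ℝ :=
  !![-(ε * x), ε * (1 - x), 0;
     0, -((1 - ε) * x), (1 - ε) * (1 - x);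
     -(1 - x), 0, x]

noncomputable def qG (x : ℝ) (n j : ℕ) : ℝ :=
  ∑ u ∈ Finset.range (n+1),
    if u % 3 = j % 3 then (n.choose u : ℝ) * x^u * (1-x)^(n-u) else 0

lemma qG_mod (x : ℝ) (n : ℕ) {j j' : ℕ} (h : j % 3 = j' % 3) : qG x n j = qG x n j' := by
  simp [qG, h]

lemma qG_rec (x : ℝ) (n j : ℕ) :
    qG x (n+1) j = (1-x) * qG x n j + x * qG x n (j+2) := by
  set hfun : ℕ → ℝ := fun v => if v % 3 = j % 3 then (n.choose v : ℝ) * x^v * (1-x)^(n+1-v) else 0 with hfun_def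
  have key : qG x (n+1) j
      = (∑ i ∈ Finset.range (n+1), hfun (i+1))
        + (∑ i ∈ Finset.range (n+1),
          if (i+1) % 3 = j % 3 then (n.choose i : ℝ) * x^(i+1) * (1-x)^(n-i) else 0)
        + hfun 0 := by
    rw [qG, Finset.sum_range_succ']
    rw [← Finset.sum_add_distrib]
    congr 1
    · apply Finset.sum_congr rfl
      intro i hi
      have h1 : n + 1 - (i+1) = n - i := by omega
      rw [Nat.choose_succ_succ]
      simp only [hfun_def, h1]
      push_cast
      split <;> ring
    · simp [hfun_def]
  have h2 : (∑ i ∈ Finset.range (n+1), hfun (i+1)) + hfun 0 = (1-x) * qG x n j := by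
    rw [← Finset.sum_range_succ' hfun (n+1)]
    rw [Finset.sum_range_succ]
    have hz : hfun (n+1) = 0 := by simp [hfun_def, Nat.choose_succ_self]
    rw [hz, add_zero, qG, Finset.mul_sum]
    apply Finset.sum_congr rfl
    intro v hv
    have hv' : v ≤ n := by simp at hv; omega
    have h1 : n + 1 - v = (n - v) + 1 := by omega
    simp only [hfun_def, h1]
    split <;> ring
  have h3 : (∑ i ∈ Finset.range (n+1),
      if (i+1) % 3 = j % 3 then (n.choose i : ℝ) * x^(i+1) * (1-x)^(n-i) else 0)
      = x * qG x n (j+2) := by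
    rw [qG, Finset.mul_sum]
    apply Finset.sum_congr rfl
    intro i _
    by_cases h : (i+1) % 3 = j % 3
    · have h' : i % 3 = (j+2) % 3 := by omega
      simp only [h, h', if_true]
      ring
    · have h' : ¬ (i % 3 = (j+2) % 3) := by omega
      simp [h, h']
  rw [key, h3]
  rw [← h2]
  ring

noncomputable def pQ (x : ℝ) (n : ℕ) (j : Fin 3) : ℝ :=
  ∑ ψ ∈ Finset.univ.filter (fun ψ : Fin (n + 1) → Fin 3 =>
      ψ 0 = 0 ∧ ψ (Fin.last n) = j),
    ∏ k : Fin n, qutritQ x (ψ k.castSucc) (ψ k.succ)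

noncomputable def pR (ε x : ℝ) (n : ℕ) (j : Fin 3) : ℝ :=
  ∑ ψ ∈ Finset.univ.filter (fun ψ : Fin (n + 1) → Fin 3 =>
      ψ 0 = 0 ∧ ψ (Fin.last n) = j),
    (∑ k : Fin n, qutritR ε x (ψ k.castSucc) (ψ k.succ))
      * ∏ k : Fin n, qutritQ x (ψ k.castSucc) (ψ k.succ)

lemma sum_filter_snoc (n : ℕ) (j : Fin 3) (W : (Fin (n + 2) → Fin 3) → ℝ) :
    ∑ ψ ∈ Finset.univ.filter (fun ψ : Fin (n + 2) → Fin 3 =>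
        ψ 0 = 0 ∧ ψ (Fin.last (n+1)) = j), W ψ
    = ∑ i : Fin 3, ∑ φ ∈ Finset.univ.filter (fun φ : Fin (n + 1) → Fin 3 =>
        φ 0 = 0 ∧ φ (Fin.last n) = i), W (Fin.snoc φ j) := by
  rw [Finset.sum_filter]
  rw [← Equiv.sum_comp (Fin.snocEquiv (fun _ => Fin 3))
      (fun ψ => if ψ 0 = 0 ∧ ψ (Fin.last (n+1)) = j then W ψ else 0)]
  rw [Fintype.sum_prod_type]
  simp only [Finset.sum_filter]
  conv_lhs => rw [Finset.sum_comm]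
  conv_rhs => rw [Finset.sum_comm]
  apply Finset.sum_congr rfl
  intro φ _
  simp only [Fin.snocEquiv, Equiv.coe_fn_mk]
  have key : ∀ v : Fin 3,
      (if (Fin.snoc φ v : Fin (n+2) → Fin 3) 0 = 0 ∧ (Fin.snoc φ v : Fin (n+2) → Fin 3) (Fin.last (n+1)) = j
        then W (Fin.snoc φ v) else 0)
      = if (φ 0 = 0 ∧ v = j) then W (Fin.snoc φ v) else 0 := by
    intro v
    have h0 : (Fin.snoc φ v : Fin (n+2) → Fin 3) 0 = φ 0 := by
      rw [show (0 : Fin (n+2)) = Fin.castSucc 0 from rfl, Fin.snoc_castSucc]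
    rw [h0, Fin.snoc_last]
  refine Eq.trans (Finset.sum_congr rfl (fun v _ => key v)) ?_
  by_cases h0 : φ 0 = 0
  · simp [h0]
  · simp [h0]


lemma snoc_prod (x : ℝ) (n : ℕ) (j : Fin 3) (φ : Fin (n+1) → Fin 3) :
    (∏ k : Fin (n+1), qutritQ x ((Fin.snoc φ j : Fin (n+2) → Fin 3) k.castSucc)
        ((Fin.snoc φ j : Fin (n+2) → Fin 3) k.succ))
    = (∏ k : Fin n, qutritQ x (φ k.castSucc) (φ k.succ)) * qutritQ x (φ (Fin.last n)) j := by
  rw [Fin.prod_univ_castSucc]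
  congr 1
  · apply Finset.prod_congr rfl
    intro k _
    rw [show (k.castSucc : Fin (n+1)).castSucc = (k.castSucc : Fin (n+1)).castSucc from rfl]
    rw [Fin.snoc_castSucc, Fin.succ_castSucc, Fin.snoc_castSucc]
  · rw [Fin.snoc_castSucc, Fin.succ_last, Fin.snoc_last]

lemma snoc_rsum (ε x : ℝ) (n : ℕ) (j : Fin 3) (φ : Fin (n+1) → Fin 3) :
    (∑ k : Fin (n+1), qutritR ε x ((Fin.snoc φ j : Fin (n+2) → Fin 3) k.castSucc)
        ((Fin.snoc φ j : Fin (n+2) → Fin 3) k.succ))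
    = (∑ k : Fin n, qutritR ε x (φ k.castSucc) (φ k.succ)) + qutritR ε x (φ (Fin.last n)) j := by
  rw [Fin.sum_univ_castSucc]
  congr 1
  · apply Finset.sum_congr rfl
    intro k _
    rw [Fin.snoc_castSucc, Fin.succ_castSucc, Fin.snoc_castSucc]
  · rw [Fin.snoc_castSucc, Fin.succ_last, Fin.snoc_last]

lemma pQ_succ (x : ℝ) (n : ℕ) (j : Fin 3) :
    pQ x (n+1) j = ∑ i : Fin 3, pQ x n i * qutritQ x i j := by
  rw [pQ, sum_filter_snoc]
  apply Finset.sum_congr rfl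
  intro i _
  rw [pQ, Finset.sum_mul]
  apply Finset.sum_congr rfl
  intro φ hφ
  simp only [Finset.mem_filter] at hφ
  rw [snoc_prod, hφ.2.2]

lemma pR_succ (ε x : ℝ) (n : ℕ) (j : Fin 3) :
    pR ε x (n+1) j = ∑ i : Fin 3,
      (pR ε x n i * qutritQ x i j
        + pQ x n i * (qutritR ε x i j * qutritQ x i j)) := by
  rw [pR, sum_filter_snoc]
  apply Finset.sum_congr rfl
  intro i _
  rw [pR, pQ, Finset.sum_mul, Finset.sum_mul, ← Finset.sum_add_distrib]
  apply Finset.sum_congr rfl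
  intro φ hφ
  simp only [Finset.mem_filter] at hφ
  rw [snoc_prod, snoc_rsum, hφ.2.2]
  ring

lemma pQ_eq (x : ℝ) : ∀ n : ℕ, ∀ j : Fin 3, pQ x n j = qG x n (j : ℕ) := by
  intro n
  induction n with
  | zero =>
    intro j
    rw [pQ]
    rw [show (Fin.last 0) = 0 from rfl]
    rw [Finset.sum_filter]
    rw [← Equiv.sum_comp (Equiv.funUnique (Fin 1) (Fin 3)).symm
        (fun ψ : Fin 1 → Fin 3 => if ψ 0 = 0 ∧ ψ 0 = j then ∏ k : Fin 0,
          qutritQ x (ψ k.castSucc) (ψ k.succ) else 0)]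
    simp only [Equiv.funUnique_symm_apply, Finset.prod_empty]
    fin_cases j <;> simp [qG] <;> decide
  | succ n ih =>
    intro j
    rw [pQ_succ, Fin.sum_univ_three, ih 0, ih 1, ih 2]
    fin_cases j
    · rw [show ((0 : Fin 3) : ℕ) = 0 from rfl, qG_rec x n 0]
      rw [qutritQ]
      norm_num [Matrix.cons_val_zero, Matrix.cons_val_one, Matrix.cons_val_two, Matrix.vecHead, Matrix.vecTail]
      ring
    · rw [show ((1 : Fin 3) : ℕ) = 1 from rfl, qG_rec x n 1]
      rw [qG_mod x n (show (1+2) % 3 = 0 % 3 from rfl)]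
      rw [qutritQ]
      norm_num [Matrix.cons_val_zero, Matrix.cons_val_one, Matrix.cons_val_two, Matrix.vecHead, Matrix.vecTail]
      ring
    · rw [show ((2 : Fin 3) : ℕ) = 2 from rfl, qG_rec x n 2]
      rw [qG_mod x n (show (2+2) % 3 = 1 % 3 from rfl)]
      rw [qutritQ]
      norm_num [Matrix.cons_val_zero, Matrix.cons_val_one, Matrix.cons_val_two, Matrix.vecHead, Matrix.vecTail]
      ring

lemma pR_eq (ε x : ℝ) : ∀ n : ℕ,
    pR ε x n 0 = -(ε * (1-x)) * qG x n 1
    ∧ pR ε x n 1 = (1-x) * (ε * qG x n 1 - qG x n 2)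
    ∧ pR ε x n 2 = (1-x) * qG x n 2 := by
  intro n
  induction n with
  | zero =>
    have hz : ∀ j : Fin 3, pR ε x 0 j = 0 := by
      intro j
      rw [pR]
      apply Finset.sum_eq_zero
      intro ψ _
      simp
    have h1 : qG x 0 1 = 0 := by simp [qG]
    have h2 : qG x 0 2 = 0 := by simp [qG]
    refine ⟨?_, ?_, ?_⟩ <;> rw [hz] <;> simp [h1, h2]
  | succ n ih =>
    obtain ⟨ih0, ih1, ih2⟩ := ih
    have hq := pQ_eq x n
    refine ⟨?_, ?_, ?_⟩
    · rw [pR_succ, Fin.sum_univ_three, ih0, ih1, ih2, hq 0, hq 1, hq 2]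
      rw [qG_rec x n 1, qG_mod x n (show (1+2) % 3 = 0 % 3 from rfl)]
      rw [qutritQ, qutritR]
      norm_num [Matrix.cons_val_zero, Matrix.cons_val_one, Matrix.cons_val_two, Matrix.vecHead, Matrix.vecTail]
      ring
    · rw [pR_succ, Fin.sum_univ_three, ih0, ih1, ih2, hq 0, hq 1, hq 2]
      rw [qG_rec x n 1, qG_mod x n (show (1+2) % 3 = 0 % 3 from rfl)]
      rw [qG_rec x n 2, qG_mod x n (show (2+2) % 3 = 1 % 3 from rfl)]
      rw [qutritQ, qutritR]
      norm_num [Matrix.cons_val_zero, Matrix.cons_val_one, Matrix.cons_val_two, Matrix.vecHead, Matrix.vecTail]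
      ring
    · rw [pR_succ, Fin.sum_univ_three, ih0, ih1, ih2, hq 0, hq 1, hq 2]
      rw [qG_rec x n 2, qG_mod x n (show (2+2) % 3 = 1 % 3 from rfl)]
      rw [qutritQ, qutritR]
      norm_num [Matrix.cons_val_zero, Matrix.cons_val_one, Matrix.cons_val_two, Matrix.vecHead, Matrix.vecTail]
      ring

lemma hstick (c : ℕ) : ∀ n : ℕ, ∑ j ∈ Finset.range n, j.choose c = n.choose (c+1) := by
  intro n
  induction n with
  | zero => simp
  | succ n ih =>
    rw [Finset.sum_range_succ, ih, Nat.choose_succ_succ']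
    omega

lemma convCC (c : ℕ) : ∀ d M : ℕ,
    ∑ j ∈ Finset.range (M+1), j.choose c * (M - j).choose d = (M+1).choose (c+d+1) := by
  intro d
  induction d with
  | zero =>
    intro M
    simp only [Nat.choose_zero_right, mul_one]
    exact hstick c (M+1)
  | succ d ihd =>
    intro M
    induction M with
    | zero => simp [Nat.choose_eq_zero_of_lt]
    | succ M ihM =>
      rw [Finset.sum_range_succ]
      have hlast : (M+1).choose c * ((M+1) - (M+1)).choose (d+1) = 0 := by
        simp
      rw [hlast, add_zero]
      have hsplit : ∀ j ∈ Finset.range (M+1),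
          j.choose c * ((M+1) - j).choose (d+1)
          = j.choose c * (M - j).choose (d+1) + j.choose c * (M - j).choose d := by
        intro j hj
        have hj' : j ≤ M := by simp at hj; omega
        have : (M+1) - j = (M - j) + 1 := by omega
        rw [this, Nat.choose_succ_succ]
        ring
      rw [Finset.sum_congr rfl hsplit, Finset.sum_add_distrib, ihM, ihd M]
      rw [show c+(d+1)+1 = c+d+1+1 from by omega]
      rw [Nat.choose_succ_succ' (M+1) (c+d+1)]
      omega

lemma tripleA (N c : ℕ) (hN : 2 ≤ N) :
    ∑ n0 ∈ Finset.Icc 1 (N-1), ∑ n2 ∈ Finset.Icc 1 (N-n0),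
      (n0-1).choose c * ((N-n0-n2).choose c * (n2-1).choose c) = N.choose (3*c+2) := by
  rw [show Finset.Icc 1 (N-1) = Finset.Ico 1 N from by rw [← Finset.Ico_add_one_right_eq_Icc]; congr 1; omega]
  rw [Finset.sum_Ico_eq_sum_range]
  have houter : ∀ i ∈ Finset.range (N-1),
      (∑ n2 ∈ Finset.Icc 1 (N-(1+i)),
        ((1+i)-1).choose c * ((N-(1+i)-n2).choose c * (n2-1).choose c))
      = i.choose c * ((N-1) - i).choose (2*c+1) := by
    intro i hi
    have hi' : i ≤ N - 2 := by simp at hi; omega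
    rw [show Finset.Icc 1 (N-(1+i)) = Finset.Ico 1 (N-(1+i)+1) from by rw [Finset.Ico_add_one_right_eq_Icc]]
    rw [Finset.sum_Ico_eq_sum_range]
    have hrange : N - (1+i) + 1 - 1 = (N-2-i) + 1 := by omega
    rw [hrange]
    have hterm : ∀ j ∈ Finset.range ((N-2-i)+1),
        ((1+i)-1).choose c * ((N-(1+i)-(1+j)).choose c * ((1+j)-1).choose c)
        = i.choose c * (j.choose c * ((N-2-i) - j).choose c) := by
      intro j hj
      have h1 : (1+i)-1 = i := by omega
      have h2 : N-(1+i)-(1+j) = (N-2-i) - j := by omega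
      have h3 : (1+j)-1 = j := by omega
      rw [h1, h2, h3]
      ring
    rw [Finset.sum_congr rfl hterm, ← Finset.mul_sum]
    have : ∑ j ∈ Finset.range ((N-2-i)+1), j.choose c * ((N-2-i) - j).choose c
        = ((N-2-i)+1).choose (c+c+1) := convCC c c (N-2-i)
    rw [this, show (N-2-i)+1 = (N-1)-i from by omega, show c+c+1 = 2*c+1 from by omega]
  rw [Finset.sum_congr rfl houter]
  have : ∑ i ∈ Finset.range (N-1), i.choose c * ((N-1) - i).choose (2*c+1)
      = ∑ i ∈ Finset.range ((N-1)+1), i.choose c * ((N-1) - i).choose (2*c+1) := by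
    rw [Finset.sum_range_succ]
    simp
  rw [this, convCC c (2*c+1) (N-1)]
  congr 1 <;> omega

lemma tripleB (N c : ℕ) (hN : 2 ≤ N) :
    ∑ n0 ∈ Finset.Icc 1 (N-1), ∑ n2 ∈ Finset.Icc 1 (N-n0),
      ((n0-1).choose c * ((N-n0-n2).choose c * (n2-1).choose c) : ℝ)
        * ((n0 : ℝ) + 2*(n2 : ℝ) - (N : ℝ) - 1) = 0 := by
  apply Finset.sum_eq_zero
  intro n0 hn0
  simp only [Finset.mem_Icc] at hn0
  have h1 : 1 ≤ n0 := hn0.1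
  have h2 : n0 ≤ N - 1 := hn0.2
  rw [show Finset.Icc 1 (N-n0) = Finset.Ico 1 (N-n0+1) from by rw [Finset.Ico_add_one_right_eq_Icc]]
  rw [Finset.sum_Ico_eq_sum_range]
  have hrange : N - n0 + 1 - 1 = (N - n0 - 1) + 1 := by omega
  rw [hrange]
  set K := N - n0 - 1 with hK
  set g : ℕ → ℝ := fun j => ((n0-1).choose c * ((N-n0-(1+j)).choose c * ((1+j)-1).choose c) : ℝ)
      * ((n0 : ℝ) + 2*((1+j : ℕ) : ℝ) - (N : ℝ) - 1) with hg
  have hrefl : ∑ j ∈ Finset.range (K+1), g ((K+1) - 1 - j) = ∑ j ∈ Finset.range (K+1), g j :=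
    Finset.sum_range_reflect g (K+1)
  have hneg : ∀ j ∈ Finset.range (K+1), g ((K+1) - 1 - j) = - g j := by
    intro j hj
    have hj' : j ≤ K := by simp at hj; omega
    have e1 : (K+1) - 1 - j = K - j := by omega
    rw [e1]
    have e2 : N - n0 - (1 + (K - j)) = j := by omega
    have e3 : (1 + (K-j)) - 1 = K - j := by omega
    have e4 : N - n0 - (1+j) = K - j := by omega
    have e5 : (1+j) - 1 = j := by omega
    rw [hg]
    simp only [e2, e3, e4, e5]
    have c1 : ((1 + (K - j) : ℕ) : ℝ) = 1 + (K : ℝ) - (j : ℝ) := by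
      push_cast [Nat.cast_sub hj']
      ring
    have c2 : ((1 + j : ℕ) : ℝ) = 1 + (j : ℝ) := by push_cast; ring
    have cK : (K : ℝ) = (N : ℝ) - (n0 : ℝ) - 1 := by
      rw [hK, Nat.cast_sub (show 1 ≤ N - n0 from by omega), Nat.cast_sub (show n0 ≤ N from by omega)]
      push_cast
      ring
    rw [c1, c2, cK]
    ring
  have : ∑ j ∈ Finset.range (K+1), g j = ∑ j ∈ Finset.range (K+1), - g j := by
    rw [← Finset.sum_congr rfl hneg]
    exact hrefl.symm
  rw [Finset.sum_neg_distrib] at this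
  linarith

lemma rhs_eq (N : ℕ) (hN : 2 ≤ N) (x : ℝ) :
    (∑ n0 ∈ Finset.Icc 1 (N - 1), ∑ n2 ∈ Finset.Icc 1 (N - n0),
        ∑ c ∈ Finset.range (min n0 (min (N + 1 - n0 - n2) n2)),
          ((Nat.choose (n0 - 1) c * Nat.choose (N - n0 - n2) c
              * Nat.choose (n2 - 1) c : ℕ) : ℝ)
            * (((n0 : ℝ) + 2 * (n2 : ℝ) - (N : ℝ) - 2) * x + 1)
            * (1 - x) ^ (N - 3 * c - 2) * x ^ (3 * c + 2))
    = (1-x) * qG x N 2 := by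
  set T : ℕ → ℕ → ℕ → ℝ := fun n0 n2 c =>
    ((Nat.choose (n0 - 1) c * Nat.choose (N - n0 - n2) c
        * Nat.choose (n2 - 1) c : ℕ) : ℝ)
      * (((n0 : ℝ) + 2 * (n2 : ℝ) - (N : ℝ) - 2) * x + 1)
      * (1 - x) ^ (N - 3 * c - 2) * x ^ (3 * c + 2) with hT
  have step1 : ∀ n0 ∈ Finset.Icc 1 (N-1), ∀ n2 ∈ Finset.Icc 1 (N-n0),
      ∑ c ∈ Finset.range (min n0 (min (N + 1 - n0 - n2) n2)), T n0 n2 c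
      = ∑ c ∈ Finset.range N, T n0 n2 c := by
    intro n0 hn0 n2 hn2
    simp only [Finset.mem_Icc] at hn0 hn2
    apply Finset.sum_subset
    · apply Finset.range_subset_range.mpr
      omega
    · intro c _ hc
      simp only [Finset.mem_range] at hc
      push_neg at hc
      have hmin : n0 ≤ c ∨ (N + 1 - n0 - n2) ≤ c ∨ n2 ≤ c := by
        rcases min_le_iff.mp hc with h | h
        · left; exact h
        · rcases min_le_iff.mp h with h' | h'
          · right; left; exact h'
          · right; right; exact h'
      have hzero : (n0-1).choose c * ((N-n0-n2).choose c) * ((n2-1).choose c) = 0 := by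
        rcases hmin with h | h | h
        · rw [Nat.choose_eq_zero_of_lt (show n0 - 1 < c from by omega)]
          ring
        · rw [Nat.choose_eq_zero_of_lt (show N - n0 - n2 < c from by omega)]
          ring
        · rw [Nat.choose_eq_zero_of_lt (show n2 - 1 < c from by omega)]
          ring
      rw [hT]
      simp only [hzero]
      simp
  rw [Finset.sum_congr rfl (fun n0 hn0 => Finset.sum_congr rfl (fun n2 hn2 => step1 n0 hn0 n2 hn2))]
  rw [Finset.sum_congr rfl (fun n0 _ => Finset.sum_comm), Finset.sum_comm]
  have step3 : ∀ c ∈ Finset.range N,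
      (∑ n0 ∈ Finset.Icc 1 (N-1), ∑ n2 ∈ Finset.Icc 1 (N-n0), T n0 n2 c)
      = ((N.choose (3*c+2) : ℕ) : ℝ) * ((1-x)^(N-3*c-2) * x^(3*c+2) * (1-x)) := by
    intro c _
    have expand : ∀ n0 ∈ Finset.Icc 1 (N-1), ∀ n2 ∈ Finset.Icc 1 (N-n0),
        T n0 n2 c
        = (1-x)^(N-3*c-2) * x^(3*c+2) * (1-x)
            * (((n0-1).choose c * ((N-n0-n2).choose c * (n2-1).choose c) : ℕ) : ℝ)
          + (1-x)^(N-3*c-2) * x^(3*c+2) * x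
            * ((((n0-1).choose c * ((N-n0-n2).choose c * (n2-1).choose c) : ℕ) : ℝ)
                * ((n0 : ℝ) + 2*(n2 : ℝ) - (N : ℝ) - 1)) := by
      intro n0 _ n2 _
      rw [hT]
      push_cast
      ring
    rw [Finset.sum_congr rfl (fun n0 hn0 => Finset.sum_congr rfl (fun n2 hn2 => expand n0 hn0 n2 hn2))]
    simp only [Finset.sum_add_distrib, ← Finset.mul_sum]
    have hA : (∑ n0 ∈ Finset.Icc 1 (N-1), ∑ n2 ∈ Finset.Icc 1 (N-n0),
        (((n0-1).choose c * ((N-n0-n2).choose c * (n2-1).choose c) : ℕ) : ℝ))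
        = ((N.choose (3*c+2) : ℕ) : ℝ) := by
      rw [← tripleA N c hN]
      push_cast
      rfl
    have hB : (∑ n0 ∈ Finset.Icc 1 (N-1), ∑ n2 ∈ Finset.Icc 1 (N-n0),
        ((((n0-1).choose c * ((N-n0-n2).choose c * (n2-1).choose c) : ℕ) : ℝ)
          * ((n0 : ℝ) + 2*(n2 : ℝ) - (N : ℝ) - 1))) = 0 := by
      rw [← tripleB N c hN]
      push_cast
      rfl
    rw [hA, hB]
    ring
  rw [Finset.sum_congr rfl step3]
  have drop : ∑ c ∈ Finset.range N,
      ((N.choose (3*c+2) : ℕ) : ℝ) * ((1-x)^(N-3*c-2) * x^(3*c+2) * (1-x))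
      = ∑ c ∈ (Finset.range N).filter (fun c => 3*c+2 ≤ N),
      ((N.choose (3*c+2) : ℕ) : ℝ) * ((1-x)^(N-3*c-2) * x^(3*c+2) * (1-x)) := by
    symm
    apply Finset.sum_filter_of_ne
    intro c _ hne
    by_contra h
    push_neg at h
    rw [Nat.choose_eq_zero_of_lt (show N < 3*c+2 from h)] at hne
    simp at hne
  rw [drop]
  rw [qG, Finset.mul_sum]
  have rhs_filter : ∑ u ∈ Finset.range (N+1),
      (1-x) * (if u % 3 = 2 % 3 then (N.choose u : ℝ) * x^u * (1-x)^(N-u) else 0)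
      = ∑ u ∈ (Finset.range (N+1)).filter (fun u => u % 3 = 2 % 3),
          (1-x) * ((N.choose u : ℝ) * x^u * (1-x)^(N-u)) := by
    rw [Finset.sum_filter]
    apply Finset.sum_congr rfl
    intro u _
    split <;> simp
  rw [rhs_filter]
  apply Finset.sum_nbij' (i := fun c => 3*c+2) (j := fun u => u/3)
  · intro c hc
    simp only [Finset.mem_filter, Finset.mem_range] at *
    omega
  · intro u hu
    simp only [Finset.mem_filter, Finset.mem_range] at *
    omega
  · intro c hc
    simp only [Finset.mem_filter, Finset.mem_range] at hc
    omega
  · intro u hu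
    simp only [Finset.mem_filter, Finset.mem_range] at hu
    omega
  · intro c hc
    simp only [Finset.mem_filter, Finset.mem_range] at hc
    rw [show N - (3*c+2) = N - 3*c - 2 from by omega]
    ring

/-- Brute-force equals analytic formula for the qutrit common-rotation model: the sum over
all `3^{N−1}` trajectories from `0` to `2` of (total reward) × (trajectory probability)
equals the ε-independent `O(N³)`-term combinatorial sum. -/
theorem qutrit_bruteforce_eq_analytic (N : ℕ) (hN : 2 ≤ N) (x ε : ℝ) :
    ∑ ψ ∈ Finset.univ.filter (fun ψ : Fin (N + 1) → Fin 3 =>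
        ψ 0 = 0 ∧ ψ (Fin.last N) = 2),
      (∑ k : Fin N, qutritR ε x (ψ k.castSucc) (ψ k.succ))
        * ∏ k : Fin N, qutritQ x (ψ k.castSucc) (ψ k.succ)
    = ∑ n0 ∈ Finset.Icc 1 (N - 1), ∑ n2 ∈ Finset.Icc 1 (N - n0),
        ∑ c ∈ Finset.range (min n0 (min (N + 1 - n0 - n2) n2)),
          ((Nat.choose (n0 - 1) c * Nat.choose (N - n0 - n2) c
              * Nat.choose (n2 - 1) c : ℕ) : ℝ)
            * (((n0 : ℝ) + 2 * (n2 : ℝ) - (N : ℝ) - 2) * x + 1)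
            * (1 - x) ^ (N - 3 * c - 2) * x ^ (3 * c + 2) := by
  have h1 : pR ε x N 2 = (1-x) * qG x N 2 := (pR_eq ε x N).2.2
  have h2 := rhs_eq N hN x
  exact h1.trans h2.symm
end
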